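/- arXiv:1606.06248 — 3 statements merged into one kernel-verified Lean document; each statement's English description precedes it below -/
import Mathlib

section
/- For all positive integers a and d, the distributive lattice J(P_{a,1,1,d}) is tCDE with edge density equal to 1; that is, E(μ; ddeg) = 1 for every toggle-symmetric distribution μ on J(P_{a,1,1,d}). -/
open scoped Classical

noncomputable section

namespace CDEPaper

/-- The down-degree of `p`: the number of elements that `p` covers, as a real number. -/
def ddeg {α : Type*} [PartialOrder α] (p : α) : ℝ :=
  (Nat.card {q : α // q ⋖ p} : ℝ)

/-- The expectation of the statistic `f` with respect to the weights `μ`. -/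
def expect {α : Type*} (μ : α → ℝ) (f : α → ℝ) : ℝ :=
  ∑ᶠ p, μ p * f p

/-- The uniform distribution on a finite type. -/
def uni (α : Type*) : α → ℝ :=
  fun _ => (Nat.card α : ℝ)⁻¹

/-- `μ` is a probability distribution. -/
def IsProbDist {α : Type*} (μ : α → ℝ) : Prop :=
  (∀ x, 0 ≤ μ x) ∧ (∑ᶠ x, μ x) = 1

/-- The `k`-chain distribution: each `p` gets probability proportional to the number of
`k`-chains (strictly increasing sequences `c₀ < c₁ < ⋯ < c_k`) passing through `p`. -/
def chainDist (α : Type*) [PartialOrder α] (k : ℕ) : α → ℝ := fun p =>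
  (Nat.card {c : Fin (k + 1) → α // StrictMono c ∧ ∃ i, c i = p} : ℝ) /
    (((k : ℝ) + 1) * (Nat.card {c : Fin (k + 1) → α // StrictMono c} : ℝ))

/-- The `m`-multichain distribution: each `p` gets probability proportional to the number of
`m`-multichains (weakly increasing sequences) passing through `p`. -/
def mchainDist (α : Type*) [PartialOrder α] (m : ℕ) : α → ℝ := fun p =>
  (Nat.card {c : Fin (m + 1) → α // Monotone c ∧ ∃ i, c i = p} : ℝ) /
    (Nat.card {cq : (Fin (m + 1) → α) × α // Monotone cq.1 ∧ ∃ i, cq.1 i = cq.2} : ℝ)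

/-- The modified `m`-multichain distribution: each `p` gets probability proportional to the
number of pairs `(c, i)` where `c` is an `m`-multichain and `c i = p`. -/
def mhatDist (α : Type*) [PartialOrder α] (m : ℕ) : α → ℝ := fun p =>
  (Nat.card {ci : (Fin (m + 1) → α) × Fin (m + 1) // Monotone ci.1 ∧ ci.1 ci.2 = p} : ℝ) /
    (((m : ℝ) + 1) * (Nat.card {c : Fin (m + 1) → α // Monotone c} : ℝ))

/-- The maximal chain distribution: each `p` gets probability proportional to the number of
maximal chains passing through `p`. -/
def maxchainDist (α : Type*) [PartialOrder α] : α → ℝ := fun p =>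
  (Nat.card {C : Set α // IsMaxChain (· ≤ ·) C ∧ p ∈ C} : ℝ) /
    (Nat.card {Cq : Set α × α // IsMaxChain (· ≤ ·) Cq.1 ∧ Cq.2 ∈ Cq.1} : ℝ)

/-- A poset has coincidental down-degree expectations (CDE). -/
def IsCDE (α : Type*) [PartialOrder α] : Prop :=
  expect (maxchainDist α) ddeg = expect (uni α) ddeg

/-- A poset is mCDE: the expected down-degree with respect to the `k`-chain distribution agrees
with the uniform expected down-degree for every `k = 0, 1, …, r` (i.e. every `k` for which a
`k`-chain exists). -/
def IsMCDE (α : Type*) [PartialOrder α] : Prop :=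
  ∀ k : ℕ, (∃ c : Fin (k + 1) → α, StrictMono c) →
    expect (chainDist α k) ddeg = expect (uni α) ddeg

/-- The distributive lattice `J(P)` of order ideals (lower sets) of a poset, ordered by
inclusion. -/
abbrev OIdeal (α : Type*) [PartialOrder α] : Type _ := {I : Set α // IsLowerSet I}

/-- The indicator statistic that `p` can be toggled into the order ideal `I`. -/
def Tplus {α : Type*} [PartialOrder α] (p : α) (I : OIdeal α) : ℝ :=
  if p ∉ I.1 ∧ IsLowerSet (I.1 ∪ {p}) then 1 else 0

/-- The indicator statistic that `p` can be toggled out of the order ideal `I`. -/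
def Tminus {α : Type*} [PartialOrder α] (p : α) (I : OIdeal α) : ℝ :=
  if p ∈ I.1 ∧ IsLowerSet (I.1 \ {p}) then 1 else 0

/-- A distribution on `J(P)` is toggle-symmetric if for every `p` the probability that `p` can
be toggled in equals the probability that `p` can be toggled out. -/
def ToggleSymmetric {α : Type*} [PartialOrder α] (μ : OIdeal α → ℝ) : Prop :=
  ∀ p : α, expect μ (Tplus p) = expect μ (Tminus p)

/-- `J(P)` is toggle-CDE (tCDE): every toggle-symmetric probability distribution has the same
expected down-degree as the uniform distribution. -/
def IsTCDE (α : Type*) [PartialOrder α] : Prop :=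
  ∀ μ : OIdeal α → ℝ, IsProbDist μ → ToggleSymmetric μ →
    expect μ ddeg = expect (uni (OIdeal α)) ddeg

end CDEPaper
namespace CDEPaper

/-! ### Skew shapes and shifted shapes -/

/-- The boxes of the skew shape `λ/ν` of height `a`, in matrix coordinates with 1-based rows
and columns: row `i` (for `1 ≤ i ≤ a`) consists of the boxes `[i,j]` with `ν i < j ≤ λ i`.
The poset structure is the one induced from the componentwise (product) order on `ℕ × ℕ`. -/
def skewCells (a : ℕ) (lam nu : ℕ → ℕ) : Set (ℕ × ℕ) :=
  {b | 1 ≤ b.1 ∧ b.1 ≤ a ∧ nu b.1 < b.2 ∧ b.2 ≤ lam b.1}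

/-- The boxes of the shifted Young diagram of a strict partition `λ` of length `l`:
the boxes `[i,j]` with `1 ≤ i ≤ l` and `i ≤ j ≤ λ i + i - 1`.  The poset structure is the one
induced from the componentwise (product) order on `ℕ × ℕ`. -/
def shiftCells (l : ℕ) (lam : ℕ → ℕ) : Set (ℕ × ℕ) :=
  {b | 1 ≤ b.1 ∧ b.1 ≤ l ∧ b.1 ≤ b.2 ∧ b.2 < lam b.1 + b.1}

/-- The shifted rook statistic `R^shift_{ij}` on order ideals of (the poset of) `S`. -/
def Rshift (S : Set (ℕ × ℕ)) (i j : ℕ) (I : OIdeal ↥S) : ℝ :=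
  (∑ᶠ (q : ↥S), if (q : ℕ × ℕ).1 ≤ i ∧ (q : ℕ × ℕ).2 ≤ j then Tplus q I else 0)
    + (∑ᶠ (q : ↥S), if i ≤ (q : ℕ × ℕ).1 ∧ j ≤ (q : ℕ × ℕ).2 then Tminus q I else 0)
    - (∑ᶠ (q : ↥S),
        if (q : ℕ × ℕ).1 < i ∧ (q : ℕ × ℕ).2 < j ∧ (q : ℕ × ℕ).1 < (q : ℕ × ℕ).2 then
          Tminus q I else 0)
    - (∑ᶠ (q : ↥S),
        if i < (q : ℕ × ℕ).1 ∧ j < (q : ℕ × ℕ).2 ∧ (q : ℕ × ℕ).1 < (q : ℕ × ℕ).2 then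
          Tplus q I else 0)

/-- The shifted diagram of `λ` (of length `l`) has an outward corner indexed by `i'`
(a north step followed by an east step on the southeast border, occurring at the lattice point
`(i', λ (i'+1) + i')`) if and only if `1 ≤ i' < l` and `λ i' ≥ λ (i'+1) + 2`. -/
def IsCorner (l : ℕ) (lam : ℕ → ℕ) (i' : ℕ) : Prop :=
  1 ≤ i' ∧ i' + 1 ≤ l ∧ lam (i' + 1) + 2 ≤ lam i'

/-- An order ideal `I ∈ J(P_λ^shift)` contains the outward corner indexed by `i'`
(i.e. the lattice path of `I` contains both steps of the corner):  equivalently, `I` contains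
both the last box `[i'+1, λ(i'+1)+i']` of row `i'+1` and the box `[i', λ(i'+1)+i'+1]`. -/
def ContainsCorner (l : ℕ) (lam : ℕ → ℕ) (I : OIdeal ↥(shiftCells l lam)) (i' : ℕ) : Prop :=
  (∃ q : ↥(shiftCells l lam), (q : ℕ × ℕ) = (i' + 1, lam (i' + 1) + i') ∧ q ∈ I.1) ∧
  (∃ q : ↥(shiftCells l lam), (q : ℕ × ℕ) = (i', lam (i' + 1) + i' + 1) ∧ q ∈ I.1)

/-- A (not necessarily strict) partition `ν` (with parts `ν 1 ≥ ν 2 ≥ ⋯`) which, viewed as a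
straight shape, is balanced with height and width both equal to `k`:  it has exactly `k`
nonzero parts, its first part is `k`, and every outward corner of its boundary path (which
occurs at the point `(i, ν (i+1))` whenever `ν i > ν (i+1)`) lies on the anti-diagonal
`i + j = k` of the `k × k` square. -/
def BalancedSquare (k : ℕ) (nu : ℕ → ℕ) : Prop :=
  (∀ i, 1 ≤ i → nu (i + 1) ≤ nu i) ∧
  (∀ i, 1 ≤ i → i ≤ k → 1 ≤ nu i) ∧
  (∀ i, k < i → nu i = 0) ∧
  nu 1 = k ∧
  (∀ i, 1 ≤ i → i + 1 ≤ k → nu (i + 1) < nu i → i + nu (i + 1) = k)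

/-- The poset `P_{a,1,1,d}`: a bottom chain `w₁ < ⋯ < w_a`, two incomparable elements `x, y`
covering `w_a`, and a top chain `z₁ < ⋯ < z_d` with `z₁` covering both `x` and `y`.
It is realized inside `ℕ × ℕ` (with the componentwise order) as
`w_i = (i,i)`, `x = (a+1, a)`, `y = (a, a+1)`, `z_j = (a+j, a+j)`. -/
def Pa11d (a d : ℕ) : Set (ℕ × ℕ) :=
  {p | (1 ≤ p.1 ∧ p.1 ≤ a ∧ p.2 = p.1) ∨ p = (a + 1, a) ∨ p = (a, a + 1) ∨
    (∃ j, 1 ≤ j ∧ j ≤ d ∧ p = (a + j, a + j))}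

/-! ### Shifted set-valued tableaux

Letters of the primed alphabet `1 < 1' < 2 < 2' < ⋯` are encoded as natural numbers:
the letter `m : ℕ` has value `m / 2 + 1` and is primed iff `m` is odd
(so `0 ↦ 1, 1 ↦ 1', 2 ↦ 2, 3 ↦ 2', …`); the order on letters is the usual order on `ℕ`. -/

/-- The value of a letter. -/
def letterVal (m : ℕ) : ℕ := m / 2 + 1

/-- `T` is a shifted set-valued tableau of shape given by the box set `S`:  each box gets a
finite nonempty set of letters, all entries of a box weakly precede all entries of any strictly
larger box, each unprimed letter appears at most once in each column, and each primed letter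
appears at most once in each row. -/
def IsSSVT (S : Set (ℕ × ℕ)) (T : ↥S → Finset ℕ) : Prop :=
  (∀ u, (T u).Nonempty) ∧
  (∀ u v : ↥S, u < v → ∀ x ∈ T u, ∀ y ∈ T v, x ≤ y) ∧
  (∀ u v : ↥S, u ≠ v → (u : ℕ × ℕ).2 = (v : ℕ × ℕ).2 →
    ∀ m : ℕ, m % 2 = 0 → ¬(m ∈ T u ∧ m ∈ T v)) ∧
  (∀ u v : ↥S, u ≠ v → (u : ℕ × ℕ).1 = (v : ℕ × ℕ).1 →
    ∀ m : ℕ, m % 2 = 1 → ¬(m ∈ T u ∧ m ∈ T v))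

/-- `T` is standard: distinct entry occurrences have distinct values, and the values used are
exactly `1, 2, …, N` where `N` is the total number of entries. -/
def IsStandardT (S : Set (ℕ × ℕ)) (T : ↥S → Finset ℕ) : Prop :=
  (∀ u v : ↥S, ∀ x ∈ T u, ∀ y ∈ T v, letterVal x = letterVal y → u = v ∧ x = y) ∧
  (∀ m : ℕ, 1 ≤ m → m ≤ ∑ᶠ (u : ↥S), (T u).card → ∃ u : ↥S, ∃ x ∈ T u, letterVal x = m)

/-- `T` is barely set-valued: exactly one box has two entries; all other boxes have one. -/
def IsBarelySetValued (S : Set (ℕ × ℕ)) (T : ↥S → Finset ℕ) : Prop :=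
  ∃ u₀ : ↥S, (T u₀).card = 2 ∧ ∀ u : ↥S, u ≠ u₀ → (T u).card = 1

/-- `T` is unprimed: no primed letters appear. -/
def IsUnprimed (S : Set (ℕ × ℕ)) (T : ↥S → Finset ℕ) : Prop :=
  ∀ u : ↥S, ∀ x ∈ T u, x % 2 = 0

/-- `g^λ`: the number of unprimed standard shifted tableaux of shape `λ`. -/
def gShift (l : ℕ) (lam : ℕ → ℕ) : ℕ :=
  Nat.card {T : ↥(shiftCells l lam) → Finset ℕ //
    IsSSVT (shiftCells l lam) T ∧ IsStandardT (shiftCells l lam) T ∧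
    (∀ u, (T u).card = 1) ∧ IsUnprimed (shiftCells l lam) T}

/-- The number of standard shifted barely set-valued tableaux of shape `λ`. -/
def numBarelySVT (l : ℕ) (lam : ℕ → ℕ) : ℕ :=
  Nat.card {T : ↥(shiftCells l lam) → Finset ℕ //
    IsSSVT (shiftCells l lam) T ∧ IsStandardT (shiftCells l lam) T ∧
    IsBarelySetValued (shiftCells l lam) T}

/-! ### Toggles, rowmotion, orbits -/

/-- The toggle `τ_p` on order ideals. -/
def toggle {α : Type*} [PartialOrder α] (p : α) (I : OIdeal α) : OIdeal α :=
  if h : p ∉ I.1 ∧ IsLowerSet (I.1 ∪ {p}) then ⟨I.1 ∪ {p}, h.2⟩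
  else if h' : p ∈ I.1 ∧ IsLowerSet (I.1 \ {p}) then ⟨I.1 \ {p}, h'.2⟩
  else I

/-- The composition of the toggles along a list, applied head first. -/
def applyToggles {α : Type*} [PartialOrder α] (L : List α) (I : OIdeal α) : OIdeal α :=
  L.foldl (fun J p => toggle p J) I

/-- The forward orbit of `x` under `Φ` (for invertible `Φ` on a finite set, the orbit). -/
def orbit {β : Type*} (Φ : β → β) (x : β) : Set β := {y | ∃ n : ℕ, Φ^[n] x = y}

/-- The probability distribution that is uniform on the orbit of `x` under `Φ` and zero
outside of it. -/
def orbitDist {β : Type*} (Φ : β → β) (x : β) : β → ℝ := fun y =>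
  if y ∈ orbit Φ x then (Nat.card ↥(orbit Φ x) : ℝ)⁻¹ else 0

/-- Rowmotion on order ideals: `I ↦ {x : x ≤ y for some minimal element y of P \ I}`. -/
def rowmotion {α : Type*} [PartialOrder α] (I : OIdeal α) : OIdeal α :=
  ⟨{x | ∃ y, (y ∉ I.1 ∧ ∀ z, z ∉ I.1 → z ≤ y → z = y) ∧ x ≤ y}, by
    intro a b hba ha
    obtain ⟨y, hy, hay⟩ := ha
    exact ⟨y, hy, le_trans hba hay⟩⟩

/-- The antichain cardinality statistic `I ↦ #max(I)`. -/
def antichainCard {α : Type*} [PartialOrder α] (I : OIdeal α) : ℝ :=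
  (Nat.card {p : α // p ∈ I.1 ∧ ∀ q, q ∈ I.1 → p ≤ q → p = q} : ℝ)

end CDEPaper
namespace CDEPaper

section GeneralAux

variable {α : Type*} [PartialOrder α]

lemma isLowerSet_union_singleton_iff {S : Set α} (hS : IsLowerSet S) (p : α) :
    IsLowerSet (S ∪ {p}) ↔ ∀ v, v < p → v ∈ S := by
  constructor
  · intro h v hv
    have hm : v ∈ S ∪ {p} := h hv.le (Or.inr rfl)
    rcases hm with h' | h'
    · exact h'
    · exact absurd (Set.mem_singleton_iff.mp h') hv.ne
  · intro h u v hvu hu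
    rcases hu with hu | hu
    · exact Or.inl (hS hvu hu)
    · rw [Set.mem_singleton_iff] at hu; subst hu
      rcases eq_or_lt_of_le hvu with h' | h'
      · exact Or.inr h'
      · exact Or.inl (h _ h')

lemma isLowerSet_diff_singleton_iff {S : Set α} (hS : IsLowerSet S) (p : α) :
    IsLowerSet (S \ {p}) ↔ ∀ v ∈ S, ¬ p < v := by
  constructor
  · intro h v hv hpv
    have hvmem : v ∈ S \ {p} := ⟨hv, by
      intro hmem
      rw [Set.mem_singleton_iff] at hmem
      exact lt_irrefl p (hmem ▸ hpv)⟩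
    have hpm : p ∈ S \ {p} := h hpv.le hvmem
    exact hpm.2 rfl
  · intro h u v hvu hu
    refine ⟨hS hvu hu.1, ?_⟩
    intro hvp
    rw [Set.mem_singleton_iff] at hvp; subst hvp
    rcases eq_or_lt_of_le hvu with h' | h'
    · exact hu.2 (Set.mem_singleton_iff.mpr h'.symm)
    · exact h u hu.1 h'

lemma Tplus_eq_one {I : OIdeal α} {p : α} (hp : p ∉ I.1) (h : ∀ v, v < p → v ∈ I.1) :
    Tplus p I = 1 := by
  rw [Tplus, if_pos ⟨hp, (isLowerSet_union_singleton_iff I.2 p).mpr h⟩]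

lemma Tplus_eq_zero_of_mem {I : OIdeal α} {p : α} (hp : p ∈ I.1) : Tplus p I = 0 := by
  rw [Tplus, if_neg]; exact fun h => h.1 hp

lemma Tplus_eq_zero_of_wit {I : OIdeal α} {p : α} (v : α) (hv : v < p) (h : v ∉ I.1) :
    Tplus p I = 0 := by
  rw [Tplus, if_neg]
  rintro ⟨-, hl⟩
  exact h ((isLowerSet_union_singleton_iff I.2 p).mp hl v hv)

lemma Tminus_eq_one {I : OIdeal α} {p : α} (hp : p ∈ I.1) (h : ∀ v ∈ I.1, ¬ p < v) :
    Tminus p I = 1 := by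
  rw [Tminus, if_pos ⟨hp, (isLowerSet_diff_singleton_iff I.2 p).mpr h⟩]

lemma Tminus_eq_zero_of_not_mem {I : OIdeal α} {p : α} (hp : p ∉ I.1) : Tminus p I = 0 := by
  rw [Tminus, if_neg]; exact fun h => hp h.1

lemma Tminus_eq_zero_of_wit {I : OIdeal α} {p : α} (v : α) (hv : p < v) (h : v ∈ I.1) :
    Tminus p I = 0 := by
  rw [Tminus, if_neg]
  rintro ⟨-, hl⟩
  exact (isLowerSet_diff_singleton_iff I.2 p).mp hl v h hv

lemma finsum_boole {ι : Type*} [Finite ι] (Q : ι → Prop) :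
    (∑ᶠ p, (if Q p then (1 : ℝ) else 0)) = (Nat.card {p // Q p} : ℝ) := by
  cases nonempty_fintype ι
  rw [finsum_eq_sum_of_fintype, Finset.sum_boole, Nat.card_eq_fintype_card,
    Fintype.card_subtype]


lemma oideal_lt_iff {J K : OIdeal α} : J < K ↔ J.1 ⊂ K.1 := Subtype.coe_lt_coe.symm

lemma ddeg_eq_finsum_Tminus [Finite α] (I : OIdeal α) :
    ddeg I = ∑ᶠ p, Tminus p I := by
  have h2 : (∑ᶠ p, Tminus p I)
      = (Nat.card {p : α // p ∈ I.1 ∧ IsLowerSet (I.1 \ {p})} : ℝ) := by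
    rw [← finsum_boole (fun p => p ∈ I.1 ∧ IsLowerSet (I.1 \ {p}))]
    simp only [Tminus]
    apply finsum_congr
    intro p
    congr
  rw [h2]
  simp only [ddeg]
  norm_cast
  symm
  have key : ∀ (q : {p : α // p ∈ I.1 ∧ IsLowerSet (I.1 \ {p})}),
      (⟨I.1 \ {q.1}, q.2.2⟩ : OIdeal α) ⋖ I := by
    rintro ⟨p, hp, hl⟩
    constructor
    · rw [oideal_lt_iff, Set.ssubset_def]
      refine ⟨Set.diff_subset, fun hle => ?_⟩
      exact (hle hp).2 rfl
    · intro J h1 h2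
      rw [oideal_lt_iff] at h1 h2
      obtain ⟨q', hq'J, hq'n⟩ := Set.exists_of_ssubset h1
      have hq'I : q' ∈ I.1 := h2.subset hq'J
      have hq'p : q' = p := by
        by_contra hne
        exact hq'n ⟨hq'I, hne⟩
      subst hq'p
      have hsub : I.1 ⊆ J.1 := by
        intro r hr
        by_cases hrp : r = q'
        · exact hrp ▸ hq'J
        · exact h1.subset ⟨hr, hrp⟩
      exact h2.not_subset hsub
  apply Nat.card_eq_of_bijective (fun q => ⟨⟨I.1 \ {q.1}, q.2.2⟩, key q⟩)
  constructor
  · rintro ⟨p, hp, hlp⟩ ⟨p', hp', hlp'⟩ h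
    have hset : I.1 \ {p} = I.1 \ {p'} :=
      Subtype.ext_iff.mp (Subtype.ext_iff.mp h)
    have : p' ∉ I.1 \ {p'} := fun hc => hc.2 rfl
    rw [← hset] at this
    have : p' = p := by
      by_contra hne
      exact this ⟨hp', hne⟩
    exact Subtype.ext this.symm
  · rintro ⟨J, hJ⟩
    have hJI : J.1 ⊂ I.1 := oideal_lt_iff.mp hJ.1
    have hne : (I.1 \ J.1).Nonempty := by
      obtain ⟨x, hxI, hxJ⟩ := Set.exists_of_ssubset hJI
      exact ⟨x, hxI, hxJ⟩
    obtain ⟨p, hpmem, hpmin⟩ : ∃ p ∈ I.1 \ J.1, ∀ v ∈ I.1 \ J.1, id v ≤ id p → id p = id v := by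
      obtain ⟨p, hp⟩ := (Set.toFinite (I.1 \ J.1)).exists_minimal hne
      exact ⟨p, hp.1, fun v hv hle => le_antisymm (hp.2 hv hle) hle⟩
    have hpJ : p ∉ J.1 := hpmem.2
    have hJp : IsLowerSet (J.1 ∪ {p}) := by
      rw [isLowerSet_union_singleton_iff J.2]
      intro v hv
      have hvI : v ∈ I.1 := I.2 hv.le hpmem.1
      by_contra hvJ
      have hpv : p = v := hpmin v ⟨hvI, hvJ⟩ hv.le
      rw [hpv] at hv
      exact lt_irrefl v hv
    have hlt : J < (⟨J.1 ∪ {p}, hJp⟩ : OIdeal α) := by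
      rw [oideal_lt_iff]
      refine Set.ssubset_iff_subset_ne.mpr ⟨Set.subset_union_left, ?_⟩
      intro he
      exact hpJ (he ▸ (Or.inr rfl : p ∈ J.1 ∪ {p}))
    have hle : (⟨J.1 ∪ {p}, hJp⟩ : OIdeal α) ≤ I := by
      show J.1 ∪ {p} ⊆ I.1
      rintro r (hr | hr)
      · exact hJI.subset hr
      · exact (Set.mem_singleton_iff.mp hr) ▸ hpmem.1
    have heq : (⟨J.1 ∪ {p}, hJp⟩ : OIdeal α) = I := by
      by_contra hne'
      exact hJ.2 hlt (lt_of_le_of_ne hle hne')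
    have hIeq : I.1 = J.1 ∪ {p} := (Subtype.ext_iff.mp heq).symm
    have hdiff : I.1 \ {p} = J.1 := by
      rw [hIeq]
      ext r
      simp only [Set.mem_diff, Set.mem_union, Set.mem_singleton_iff]
      constructor
      · rintro ⟨h | h, hne⟩
        · exact h
        · exact absurd h hne
      · intro hr
        exact ⟨Or.inl hr, fun he => hpJ (he ▸ hr)⟩
    refine ⟨⟨p, ⟨hIeq ▸ Or.inr rfl, ?_⟩⟩, ?_⟩
    · rw [hdiff]; exact J.2
    · apply Subtype.ext
      apply Subtype.ext
      exact hdiff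

lemma oideal_nonempty : Nonempty (OIdeal α) :=
  ⟨⟨∅, fun _ _ _ h => h⟩⟩

lemma uni_isProbDist {ι : Type*} [Finite ι] [Nonempty ι] : IsProbDist (uni ι) := by
  constructor
  · intro x
    simp only [uni]
    positivity
  · cases nonempty_fintype ι
    simp only [uni]
    rw [finsum_eq_sum_of_fintype, Finset.sum_const, Finset.card_univ, nsmul_eq_mul,
      Nat.card_eq_fintype_card, mul_inv_cancel₀]
    exact_mod_cast Fintype.card_ne_zero

lemma toggleSymmetric_uni [Finite α] : ToggleSymmetric (uni (OIdeal α)) := by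
  intro p
  have hcard : Nat.card {I : OIdeal α // p ∉ I.1 ∧ IsLowerSet (I.1 ∪ {p})}
      = Nat.card {I : OIdeal α // p ∈ I.1 ∧ IsLowerSet (I.1 \ {p})} := by
    have hwd : ∀ (J : {I : OIdeal α // p ∉ I.1 ∧ IsLowerSet (I.1 ∪ {p})}),
        p ∈ (J.1.1 ∪ {p}) ∧ IsLowerSet ((J.1.1 ∪ {p}) \ {p}) := by
      rintro ⟨J, hJ1, hJ2⟩
      refine ⟨Or.inr rfl, ?_⟩
      have : (J.1 ∪ {p}) \ {p} = J.1 := by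
        ext r
        simp only [Set.mem_diff, Set.mem_union, Set.mem_singleton_iff]
        constructor
        · rintro ⟨h | h, hne⟩
          · exact h
          · exact absurd h hne
        · intro hr
          exact ⟨Or.inl hr, fun he => hJ1 (he ▸ hr)⟩
      rw [this]; exact J.2
    apply Nat.card_eq_of_bijective
      (fun J => ⟨⟨J.1.1 ∪ {p}, J.2.2⟩, hwd J⟩)
    constructor
    · rintro ⟨⟨J, hJl⟩, hJ1, hJ2⟩ ⟨⟨K, hKl⟩, hK1, hK2⟩ h
      have hset : J ∪ {p} = K ∪ {p} := Subtype.ext_iff.mp (Subtype.ext_iff.mp h)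
      apply Subtype.ext; apply Subtype.ext
      ext r
      constructor
      · intro hr
        have : r ∈ K ∪ {p} := hset ▸ (Or.inl hr : r ∈ J ∪ {p})
        rcases this with h' | h'
        · exact h'
        · exact absurd (Set.mem_singleton_iff.mp h' ▸ hr) hJ1
      · intro hr
        have : r ∈ J ∪ {p} := hset ▸ (Or.inl hr : r ∈ K ∪ {p})
        rcases this with h' | h'
        · exact h'
        · exact absurd (Set.mem_singleton_iff.mp h' ▸ hr) hK1
    · rintro ⟨⟨K, hKl⟩, hK1, hK2⟩
      have hKeq : (K \ {p}) ∪ {p} = K := by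
        ext r
        simp only [Set.mem_union, Set.mem_diff, Set.mem_singleton_iff]
        constructor
        · rintro (⟨h, -⟩ | h)
          · exact h
          · exact h ▸ hK1
        · intro hr
          by_cases hrp : r = p
          · exact Or.inr hrp
          · exact Or.inl ⟨hr, hrp⟩
      refine ⟨⟨⟨K \ {p}, hK2⟩, ⟨fun hc => hc.2 rfl, ?_⟩⟩, ?_⟩
      · show IsLowerSet ((K \ {p}) ∪ {p})
        rw [hKeq]; exact hKl
      · apply Subtype.ext; apply Subtype.ext
        exact hKeq
  cases nonempty_fintype (OIdeal α)
  simp only [expect, uni]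
  rw [finsum_eq_sum_of_fintype, finsum_eq_sum_of_fintype, ← Finset.mul_sum, ← Finset.mul_sum]
  congr 1
  have e1 : ∑ I : OIdeal α, Tplus p I
      = (Nat.card {I : OIdeal α // p ∉ I.1 ∧ IsLowerSet (I.1 ∪ {p})} : ℝ) := by
    rw [← finsum_boole (fun I : OIdeal α => p ∉ I.1 ∧ IsLowerSet (I.1 ∪ {p})),
      finsum_eq_sum_of_fintype]
    simp only [Tplus]
    apply Finset.sum_congr rfl
    intro i _
    congr
  have e2 : ∑ I : OIdeal α, Tminus p I
      = (Nat.card {I : OIdeal α // p ∈ I.1 ∧ IsLowerSet (I.1 \ {p})} : ℝ) := by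
    rw [← finsum_boole (fun I : OIdeal α => p ∈ I.1 ∧ IsLowerSet (I.1 \ {p})),
      finsum_eq_sum_of_fintype]
    simp only [Tminus]
    apply Finset.sum_congr rfl
    intro i _
    congr
  rw [e1, e2, hcard]

end GeneralAux

end CDEPaper

namespace CDEPaper

section Pa11dAux

variable {a d : ℕ}

lemma mem_Pa11d_iff {p : ℕ × ℕ} :
    p ∈ Pa11d a d ↔ (p.1 = p.2 ∧ 1 ≤ p.1 ∧ p.1 ≤ a + d) ∨ p = (a + 1, a) ∨ p = (a, a + 1) := by
  obtain ⟨i, j⟩ := p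
  simp only [Pa11d, Set.mem_setOf_eq, Prod.mk.injEq, Prod.ext_iff]
  constructor
  · rintro (⟨h1, h2, h3⟩ | ⟨h1, h2⟩ | ⟨h1, h2⟩ | ⟨k, hk1, hk2, h3, h4⟩)
    · exact Or.inl ⟨by omega, by omega, by omega⟩
    · exact Or.inr (Or.inl ⟨h1, h2⟩)
    · exact Or.inr (Or.inr ⟨h1, h2⟩)
    · exact Or.inl ⟨by omega, by omega, by omega⟩
  · rintro (⟨h1, h2, h3⟩ | ⟨h1, h2⟩ | ⟨h1, h2⟩)
    · by_cases hia : i ≤ a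
      · exact Or.inl ⟨by omega, hia, by omega⟩
      · exact Or.inr (Or.inr (Or.inr ⟨i - a, by omega, by omega, by omega, by omega⟩))
    · exact Or.inr (Or.inl ⟨h1, h2⟩)
    · exact Or.inr (Or.inr (Or.inl ⟨h1, h2⟩))

lemma diag_mem_iff {j : ℕ} : ((j, j) : ℕ × ℕ) ∈ Pa11d a d ↔ 1 ≤ j ∧ j ≤ a + d := by
  rw [mem_Pa11d_iff]
  simp only [Prod.ext_iff, Prod.mk.injEq, true_and]
  omega

lemma diag_mem {j : ℕ} (h1 : 1 ≤ j) (h2 : j ≤ a + d) : ((j, j) : ℕ × ℕ) ∈ Pa11d a d :=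
  diag_mem_iff.mpr ⟨h1, h2⟩

lemma x_mem : ((a + 1, a) : ℕ × ℕ) ∈ Pa11d a d := mem_Pa11d_iff.mpr (Or.inr (Or.inl rfl))

lemma y_mem : ((a, a + 1) : ℕ × ℕ) ∈ Pa11d a d := mem_Pa11d_iff.mpr (Or.inr (Or.inr rfl))

lemma Pa11d_finite (a d : ℕ) : (Pa11d a d).Finite := by
  apply Set.Finite.subset (Set.finite_Icc ((0, 0) : ℕ × ℕ) ((a + d + 1, a + d + 1) : ℕ × ℕ))
  rintro ⟨i, j⟩ hp
  rw [mem_Pa11d_iff] at hp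
  simp only [Set.mem_Icc, Prod.le_def, Prod.ext_iff] at hp ⊢
  omega

lemma pe_le_iff (u v : ↥(Pa11d a d)) : u ≤ v ↔ u.1.1 ≤ v.1.1 ∧ u.1.2 ≤ v.1.2 := by
  rw [← Subtype.coe_le_coe, Prod.le_def]

lemma pe_lt_iff (u v : ↥(Pa11d a d)) :
    u < v ↔ (u.1.1 ≤ v.1.1 ∧ u.1.2 ≤ v.1.2) ∧ ¬(v.1.1 ≤ u.1.1 ∧ v.1.2 ≤ u.1.2) := by
  rw [lt_iff_le_not_ge, pe_le_iff, pe_le_iff]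

/-- The weight function: 1 on the bottom chain, 1/2 on `x` and `y`, 0 on the top chain. -/
def gwt (a d : ℕ) (q : ↥(Pa11d a d)) : ℝ :=
  if q.1.1 = q.1.2 then (if q.1.1 ≤ a then 1 else 0) else 1 / 2

end Pa11dAux

end CDEPaper

namespace CDEPaper

section KeyAux

variable {a d : ℕ}

/-- The diagonal element `(j,j)` lies in the order ideal `I`. -/
def DiagIn (a d : ℕ) (I : OIdeal ↥(Pa11d a d)) (j : ℕ) : Prop :=
  ∃ h : ((j, j) : ℕ × ℕ) ∈ Pa11d a d, (⟨(j, j), h⟩ : ↥(Pa11d a d)) ∈ I.1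

lemma mem_of_diagIn {I : OIdeal ↥(Pa11d a d)} {i : ℕ} (h : ((i, i) : ℕ × ℕ) ∈ Pa11d a d)
    (hD : DiagIn a d I i) : (⟨(i, i), h⟩ : ↥(Pa11d a d)) ∈ I.1 := by
  rcases hD with ⟨h', m⟩
  exact m

lemma diagIn_le {I : OIdeal ↥(Pa11d a d)} {j : ℕ} (h : DiagIn a d I j) :
    1 ≤ j ∧ j ≤ a + d := by
  rcases h with ⟨h, -⟩
  exact diag_mem_iff.mp h

lemma diagIn_mono {I : OIdeal ↥(Pa11d a d)} {i j : ℕ} (h1 : 1 ≤ i) (h2 : i ≤ j)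
    (h : DiagIn a d I j) : DiagIn a d I i := by
  rcases h with ⟨hj, hjS⟩
  have hi : ((i, i) : ℕ × ℕ) ∈ Pa11d a d := diag_mem h1 (le_trans h2 (diag_mem_iff.mp hj).2)
  refine ⟨hi, I.2 ?_ hjS⟩
  rw [pe_le_iff]
  exact ⟨h2, h2⟩

lemma diagIn_of_x {I : OIdeal ↥(Pa11d a d)}
    (hx : (⟨(a + 1, a), x_mem⟩ : ↥(Pa11d a d)) ∈ I.1) {j : ℕ} (h1 : 1 ≤ j) (h2 : j ≤ a) :
    DiagIn a d I j := by
  refine ⟨diag_mem h1 (by omega), I.2 ?_ hx⟩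
  rw [pe_le_iff]
  exact ⟨show j ≤ a + 1 by omega, h2⟩

lemma diagIn_of_y {I : OIdeal ↥(Pa11d a d)}
    (hy : (⟨(a, a + 1), y_mem⟩ : ↥(Pa11d a d)) ∈ I.1) {j : ℕ} (h1 : 1 ≤ j) (h2 : j ≤ a) :
    DiagIn a d I j := by
  refine ⟨diag_mem h1 (by omega), I.2 ?_ hy⟩
  rw [pe_le_iff]
  exact ⟨h2, show j ≤ a + 1 by omega⟩

lemma x_of_diagIn {I : OIdeal ↥(Pa11d a d)} {j : ℕ} (hj : a + 1 ≤ j) (h : DiagIn a d I j) :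
    (⟨(a + 1, a), x_mem⟩ : ↥(Pa11d a d)) ∈ I.1 := by
  rcases h with ⟨hjm, hjS⟩
  refine I.2 ?_ hjS
  rw [pe_le_iff]
  exact ⟨hj, show a ≤ j by omega⟩

lemma y_of_diagIn {I : OIdeal ↥(Pa11d a d)} {j : ℕ} (hj : a + 1 ≤ j) (h : DiagIn a d I j) :
    (⟨(a, a + 1), y_mem⟩ : ↥(Pa11d a d)) ∈ I.1 := by
  rcases h with ⟨hjm, hjS⟩
  refine I.2 ?_ hjS
  rw [pe_le_iff]
  exact ⟨show a ≤ j by omega, hj⟩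

/-- The summand of the key identity. -/
def phiFn (a d : ℕ) (I : OIdeal ↥(Pa11d a d)) (q : ↥(Pa11d a d)) : ℝ :=
  gwt a d q * Tplus q I + (1 - gwt a d q) * Tminus q I

lemma phi_low (I : OIdeal ↥(Pa11d a d)) (q : ↥(Pa11d a d)) (h1 : q.1.1 = q.1.2)
    (h2 : q.1.1 ≤ a) : phiFn a d I q = Tplus q I := by
  simp only [phiFn, gwt, if_pos h1, if_pos h2]
  ring

lemma phi_high (I : OIdeal ↥(Pa11d a d)) (q : ↥(Pa11d a d)) (h1 : q.1.1 = q.1.2)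
    (h2 : ¬ q.1.1 ≤ a) : phiFn a d I q = Tminus q I := by
  simp only [phiFn, gwt, if_pos h1, if_neg h2]
  ring

lemma phi_xy (I : OIdeal ↥(Pa11d a d)) (q : ↥(Pa11d a d)) (h1 : q.1.1 ≠ q.1.2) :
    phiFn a d I q = (Tplus q I + Tminus q I) / 2 := by
  simp only [phiFn, gwt, if_neg h1]
  ring

lemma key_pointwise (a d : ℕ) (ha : 1 ≤ a) (hd : 1 ≤ d) (I : OIdeal ↥(Pa11d a d)) :
    (∑ᶠ q : ↥(Pa11d a d), phiFn a d I q) = 1 := by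
  haveI : Finite ↥(Pa11d a d) := (Pa11d_finite a d).to_subtype
  by_cases hda1 : DiagIn a d I (a + 1)
  · -- Case 3: the ideal reaches into the top chain
    have hex : ∃ m, a + 1 ≤ m ∧ ¬ DiagIn a d I m :=
      ⟨a + d + 1, by omega, fun h => by have := diagIn_le h; omega⟩
    obtain ⟨ht1, ht2⟩ := Nat.find_spec hex
    set t := Nat.find hex with ht
    have htmin : ∀ m, a + 1 ≤ m → m < t → DiagIn a d I m := by
      intro m h1 h2
      by_contra hm
      exact Nat.find_min hex h2 ⟨h1, hm⟩
    have hta : a + 2 ≤ t := by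
      rcases Nat.lt_or_ge t (a + 2) with h | h
      · have he : t = a + 1 := by omega
        rw [he] at ht2
        exact absurd hda1 ht2
      · exact h
    have hDk : DiagIn a d I (t - 1) := by
      rcases Nat.eq_or_lt_of_le hta with h | h
      · have he : t - 1 = a + 1 := by omega
        rw [he]
        exact hda1
      · exact htmin (t - 1) (by omega) (by omega)
    have hkd : t - 1 ≤ a + d := (diagIn_le hDk).2
    have hDle : ∀ j, DiagIn a d I j → j ≤ t - 1 := by
      intro j hj
      by_contra hjk
      exact ht2 (diagIn_mono (by omega) (by omega) hj)
    rw [finsum_eq_single _ (⟨(t - 1, t - 1), diag_mem (by omega) hkd⟩ : ↥(Pa11d a d)) ?_]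
    · rw [phi_high I _ rfl (show ¬ t - 1 ≤ a by omega)]
      apply Tminus_eq_one (mem_of_diagIn _ hDk)
      rintro ⟨⟨i, j⟩, hvP⟩ hv hlt
      rw [pe_lt_iff] at hlt
      have hlt' : (t - 1 ≤ i ∧ t - 1 ≤ j) ∧ ¬(i ≤ t - 1 ∧ j ≤ t - 1) := hlt
      rcases mem_Pa11d_iff.mp hvP with ⟨hij, h1, h2⟩ | hxy | hxy
      · have hij' : i = j := hij
        subst hij'
        have hDi : DiagIn a d I i := ⟨hvP, hv⟩
        have := hDle i hDi
        omega
      · simp only [Prod.mk.injEq] at hxy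
        omega
      · simp only [Prod.mk.injEq] at hxy
        omega
    · -- off-diagonal terms vanish
      rintro ⟨⟨i, j⟩, hqP⟩ hq
      rcases mem_Pa11d_iff.mp hqP with ⟨hij, h1, h2⟩ | hxy | hxy
      · have hij' : i = j := hij
        subst hij'
        have h1' : 1 ≤ i := h1
        have h2' : i ≤ a + d := h2
        have hik : i ≠ t - 1 := fun h =>
          hq (Subtype.ext (show ((i, i) : ℕ × ℕ) = ((t - 1, t - 1) : ℕ × ℕ) by rw [h]))
        by_cases hia : i ≤ a
        · rw [phi_low I _ rfl hia]
          exact Tplus_eq_zero_of_mem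
            (mem_of_diagIn hqP (diagIn_mono h1' (by omega) hDk))
        · rw [phi_high I _ rfl hia]
          rcases Nat.lt_or_ge i (t - 1) with hcase | hcase
          · apply Tminus_eq_zero_of_wit
              (⟨(i + 1, i + 1), diag_mem (by omega) (by omega)⟩ : ↥(Pa11d a d))
            · rw [pe_lt_iff]
              exact ⟨⟨show i ≤ i + 1 by omega, show i ≤ i + 1 by omega⟩,
                fun hc => by have hc' : i + 1 ≤ i ∧ i + 1 ≤ i := hc; omega⟩
            · exact mem_of_diagIn _ (diagIn_mono (by omega) (by omega) hDk)
          · apply Tminus_eq_zero_of_not_mem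
            intro hm
            have := hDle i ⟨hqP, hm⟩
            omega
      · have hq' : (⟨(i, j), hqP⟩ : ↥(Pa11d a d)) = ⟨(a + 1, a), x_mem⟩ := Subtype.ext hxy
        rw [hq']
        rw [phi_xy I _ (show a + 1 ≠ a by omega)]
        have hT1 : Tplus (⟨(a + 1, a), x_mem⟩ : ↥(Pa11d a d)) I = 0 :=
          Tplus_eq_zero_of_mem (x_of_diagIn (le_refl (a + 1)) hda1)
        have hT2 : Tminus (⟨(a + 1, a), x_mem⟩ : ↥(Pa11d a d)) I = 0 := by
          apply Tminus_eq_zero_of_wit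
            (⟨(a + 1, a + 1), diag_mem (by omega) (by omega)⟩ : ↥(Pa11d a d))
          · rw [pe_lt_iff]
            exact ⟨⟨le_refl _, show a ≤ a + 1 by omega⟩,
              fun hc => by have hc' : a + 1 ≤ a + 1 ∧ a + 1 ≤ a := hc; omega⟩
          · exact mem_of_diagIn _ hda1
        rw [hT1, hT2]
        norm_num
      · have hq' : (⟨(i, j), hqP⟩ : ↥(Pa11d a d)) = ⟨(a, a + 1), y_mem⟩ := Subtype.ext hxy
        rw [hq']
        rw [phi_xy I _ (show a ≠ a + 1 by omega)]
        have hT1 : Tplus (⟨(a, a + 1), y_mem⟩ : ↥(Pa11d a d)) I = 0 :=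
          Tplus_eq_zero_of_mem (y_of_diagIn (le_refl (a + 1)) hda1)
        have hT2 : Tminus (⟨(a, a + 1), y_mem⟩ : ↥(Pa11d a d)) I = 0 := by
          apply Tminus_eq_zero_of_wit
            (⟨(a + 1, a + 1), diag_mem (by omega) (by omega)⟩ : ↥(Pa11d a d))
          · rw [pe_lt_iff]
            exact ⟨⟨show a ≤ a + 1 by omega, le_refl _⟩,
              fun hc => by have hc' : a + 1 ≤ a ∧ a + 1 ≤ a + 1 := hc; omega⟩
          · exact mem_of_diagIn _ hda1
        rw [hT1, hT2]
        norm_num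
  · by_cases hda : DiagIn a d I a
    · -- Case 2: all of the bottom chain, none of the top chain
      have hnd : ∀ j, a + 1 ≤ j → ¬ DiagIn a d I j := fun j hj h =>
        hda1 (diagIn_mono (by omega) hj h)
      have hoff : ∀ q : ↥(Pa11d a d),
          q ≠ ⟨(a + 1, a), x_mem⟩ → q ≠ ⟨(a, a + 1), y_mem⟩ → phiFn a d I q = 0 := by
        rintro ⟨⟨i, j⟩, hqP⟩ hqx hqy
        rcases mem_Pa11d_iff.mp hqP with ⟨hij, h1, h2⟩ | hxy | hxy
        · have hij' : i = j := hij
          subst hij'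
          have h1' : 1 ≤ i := h1
          by_cases hia : i ≤ a
          · rw [phi_low I _ rfl hia]
            exact Tplus_eq_zero_of_mem (mem_of_diagIn hqP (diagIn_mono h1' hia hda))
          · rw [phi_high I _ rfl hia]
            apply Tminus_eq_zero_of_not_mem
            intro hm
            exact hnd i (by omega) ⟨hqP, hm⟩
        · exact absurd (Subtype.ext hxy) hqx
        · exact absurd (Subtype.ext hxy) hqy
      have hxyne : (⟨(a + 1, a), x_mem⟩ : ↥(Pa11d a d)) ≠ ⟨(a, a + 1), y_mem⟩ := by
        intro h
        have := Subtype.ext_iff.mp h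
        simp only [Prod.mk.injEq] at this
        omega
      have hphix : phiFn a d I ⟨(a + 1, a), x_mem⟩ = 1 / 2 := by
        rw [phi_xy I _ (show a + 1 ≠ a by omega)]
        by_cases hx : (⟨(a + 1, a), x_mem⟩ : ↥(Pa11d a d)) ∈ I.1
        · rw [Tplus_eq_zero_of_mem hx, Tminus_eq_one hx ?_]
          · norm_num
          · rintro ⟨⟨i, j⟩, hvP⟩ hv hlt
            rw [pe_lt_iff] at hlt
            have hlt' : (a + 1 ≤ i ∧ a ≤ j) ∧ ¬(i ≤ a + 1 ∧ j ≤ a) := hlt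
            rcases mem_Pa11d_iff.mp hvP with ⟨hij, h1, h2⟩ | hxy | hxy
            · have hij' : i = j := hij
              subst hij'
              exact hnd i (by omega) ⟨hvP, hv⟩
            · simp only [Prod.mk.injEq] at hxy
              omega
            · simp only [Prod.mk.injEq] at hxy
              omega
        · rw [Tminus_eq_zero_of_not_mem hx, Tplus_eq_one hx ?_]
          · norm_num
          · rintro ⟨⟨i, j⟩, hvP⟩ hlt
            rw [pe_lt_iff] at hlt
            have hlt' : (i ≤ a + 1 ∧ j ≤ a) ∧ ¬(a + 1 ≤ i ∧ a ≤ j) := hlt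
            rcases mem_Pa11d_iff.mp hvP with ⟨hij, h1, h2⟩ | hxy | hxy
            · have hij' : i = j := hij
              subst hij'
              have h1' : 1 ≤ i := h1
              exact mem_of_diagIn hvP (diagIn_mono h1' (by omega) hda)
            · simp only [Prod.mk.injEq] at hxy
              omega
            · simp only [Prod.mk.injEq] at hxy
              omega
      have hphiy : phiFn a d I ⟨(a, a + 1), y_mem⟩ = 1 / 2 := by
        rw [phi_xy I _ (show a ≠ a + 1 by omega)]
        by_cases hy : (⟨(a, a + 1), y_mem⟩ : ↥(Pa11d a d)) ∈ I.1
        · rw [Tplus_eq_zero_of_mem hy, Tminus_eq_one hy ?_]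
          · norm_num
          · rintro ⟨⟨i, j⟩, hvP⟩ hv hlt
            rw [pe_lt_iff] at hlt
            have hlt' : (a ≤ i ∧ a + 1 ≤ j) ∧ ¬(i ≤ a ∧ j ≤ a + 1) := hlt
            rcases mem_Pa11d_iff.mp hvP with ⟨hij, h1, h2⟩ | hxy | hxy
            · have hij' : i = j := hij
              subst hij'
              exact hnd i (by omega) ⟨hvP, hv⟩
            · simp only [Prod.mk.injEq] at hxy
              omega
            · simp only [Prod.mk.injEq] at hxy
              omega
        · rw [Tminus_eq_zero_of_not_mem hy, Tplus_eq_one hy ?_]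
          · norm_num
          · rintro ⟨⟨i, j⟩, hvP⟩ hlt
            rw [pe_lt_iff] at hlt
            have hlt' : (i ≤ a ∧ j ≤ a + 1) ∧ ¬(a ≤ i ∧ a + 1 ≤ j) := hlt
            rcases mem_Pa11d_iff.mp hvP with ⟨hij, h1, h2⟩ | hxy | hxy
            · have hij' : i = j := hij
              subst hij'
              have h1' : 1 ≤ i := h1
              exact mem_of_diagIn hvP (diagIn_mono h1' (by omega) hda)
            · simp only [Prod.mk.injEq] at hxy
              omega
            · simp only [Prod.mk.injEq] at hxy
              omega
      rw [finsum_eq_finset_sum_of_support_subset _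
        (s := ({⟨(a + 1, a), x_mem⟩, ⟨(a, a + 1), y_mem⟩} : Finset ↥(Pa11d a d))) ?_]
      · rw [Finset.sum_pair hxyne, hphix, hphiy]
        norm_num
      · intro q hq
        simp only [Finset.coe_insert, Finset.coe_singleton, Set.mem_insert_iff,
          Set.mem_singleton_iff]
        by_contra hc
        push_neg at hc
        exact hq (hoff q hc.1 hc.2)
    · -- Case 1: the ideal is contained in the bottom chain
      have hex : ∃ m, 1 ≤ m ∧ ¬ DiagIn a d I m := ⟨a, ha, hda⟩
      obtain ⟨ht1, ht2⟩ := Nat.find_spec hex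
      set t := Nat.find hex with ht
      have hta : t ≤ a := Nat.find_min' hex ⟨ha, hda⟩
      have htmin : ∀ m, 1 ≤ m → m < t → DiagIn a d I m := by
        intro m h1 h2
        by_contra hm
        exact Nat.find_min hex h2 ⟨h1, hm⟩
      have hnd : ∀ j, t ≤ j → ¬ DiagIn a d I j := fun j hj h =>
        ht2 (diagIn_mono ht1 hj h)
      have hq0mem : ((t, t) : ℕ × ℕ) ∈ Pa11d a d := diag_mem ht1 (by omega)
      have hq0nI : (⟨(t, t), hq0mem⟩ : ↥(Pa11d a d)) ∉ I.1 := fun hm => ht2 ⟨hq0mem, hm⟩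
      rw [finsum_eq_single _ (⟨(t, t), hq0mem⟩ : ↥(Pa11d a d)) ?_]
      · rw [phi_low I _ rfl hta]
        apply Tplus_eq_one hq0nI
        rintro ⟨⟨i, j⟩, hvP⟩ hlt
        rw [pe_lt_iff] at hlt
        have hlt' : (i ≤ t ∧ j ≤ t) ∧ ¬(t ≤ i ∧ t ≤ j) := hlt
        rcases mem_Pa11d_iff.mp hvP with ⟨hij, h1, h2⟩ | hxy | hxy
        · have hij' : i = j := hij
          subst hij'
          have h1' : 1 ≤ i := h1
          exact mem_of_diagIn hvP (htmin i h1' (by omega))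
        · simp only [Prod.mk.injEq] at hxy
          omega
        · simp only [Prod.mk.injEq] at hxy
          omega
      · rintro ⟨⟨i, j⟩, hqP⟩ hq
        rcases mem_Pa11d_iff.mp hqP with ⟨hij, h1, h2⟩ | hxy | hxy
        · have hij' : i = j := hij
          subst hij'
          have h1' : 1 ≤ i := h1
          have hit : i ≠ t := fun h =>
            hq (Subtype.ext (show ((i, i) : ℕ × ℕ) = ((t, t) : ℕ × ℕ) by rw [h]))
          by_cases hia : i ≤ a
          · rw [phi_low I _ rfl hia]
            rcases Nat.lt_or_ge i t with hcase | hcase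
            · exact Tplus_eq_zero_of_mem (mem_of_diagIn hqP (htmin i h1' hcase))
            · apply Tplus_eq_zero_of_wit (⟨(t, t), hq0mem⟩ : ↥(Pa11d a d))
              · rw [pe_lt_iff]
                exact ⟨⟨show t ≤ i by omega, show t ≤ i by omega⟩,
                  fun hc => by have hc' : i ≤ t ∧ i ≤ t := hc; omega⟩
              · exact hq0nI
          · rw [phi_high I _ rfl hia]
            apply Tminus_eq_zero_of_not_mem
            intro hm
            exact hnd i (by omega) ⟨hqP, hm⟩
        · have hq' : (⟨(i, j), hqP⟩ : ↥(Pa11d a d)) = ⟨(a + 1, a), x_mem⟩ := Subtype.ext hxy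
          rw [hq']
          rw [phi_xy I _ (show a + 1 ≠ a by omega)]
          have hT1 : Tplus (⟨(a + 1, a), x_mem⟩ : ↥(Pa11d a d)) I = 0 := by
            apply Tplus_eq_zero_of_wit (⟨(t, t), hq0mem⟩ : ↥(Pa11d a d))
            · rw [pe_lt_iff]
              exact ⟨⟨show t ≤ a + 1 by omega, show t ≤ a by omega⟩,
                fun hc => by have hc' : a + 1 ≤ t ∧ a ≤ t := hc; omega⟩
            · exact hq0nI
          have hT2 : Tminus (⟨(a + 1, a), x_mem⟩ : ↥(Pa11d a d)) I = 0 := by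
            apply Tminus_eq_zero_of_not_mem
            intro hm
            exact ht2 (diagIn_of_x hm ht1 hta)
          rw [hT1, hT2]
          norm_num
        · have hq' : (⟨(i, j), hqP⟩ : ↥(Pa11d a d)) = ⟨(a, a + 1), y_mem⟩ := Subtype.ext hxy
          rw [hq']
          rw [phi_xy I _ (show a ≠ a + 1 by omega)]
          have hT1 : Tplus (⟨(a, a + 1), y_mem⟩ : ↥(Pa11d a d)) I = 0 := by
            apply Tplus_eq_zero_of_wit (⟨(t, t), hq0mem⟩ : ↥(Pa11d a d))
            · rw [pe_lt_iff]
              exact ⟨⟨show t ≤ a by omega, show t ≤ a + 1 by omega⟩,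
                fun hc => by have hc' : a ≤ t ∧ a + 1 ≤ t := hc; omega⟩
            · exact hq0nI
          have hT2 : Tminus (⟨(a, a + 1), y_mem⟩ : ↥(Pa11d a d)) I = 0 := by
            apply Tminus_eq_zero_of_not_mem
            intro hm
            exact ht2 (diagIn_of_y hm ht1 hta)
          rw [hT1, hT2]
          norm_num

end KeyAux

end CDEPaper

namespace CDEPaper

lemma main_calc (a d : ℕ) (ha : 1 ≤ a) (hd : 1 ≤ d) (μ : OIdeal ↥(Pa11d a d) → ℝ)
    (hμ : IsProbDist μ) (hts : ToggleSymmetric μ) : expect μ ddeg = 1 := by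
  haveI : Finite ↥(Pa11d a d) := (Pa11d_finite a d).to_subtype
  haveI : Fintype ↥(Pa11d a d) := Fintype.ofFinite _
  haveI : Fintype (OIdeal ↥(Pa11d a d)) := Fintype.ofFinite _
  have hdd : ∀ I : OIdeal ↥(Pa11d a d), ddeg I = ∑ q : ↥(Pa11d a d), Tminus q I := fun I => by
    rw [ddeg_eq_finsum_Tminus, finsum_eq_sum_of_fintype]
  have hkey : ∀ I : OIdeal ↥(Pa11d a d),
      (∑ q : ↥(Pa11d a d), phiFn a d I q) = 1 := fun I => by
    rw [← finsum_eq_sum_of_fintype]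
    exact key_pointwise a d ha hd I
  have hts' : ∀ q : ↥(Pa11d a d),
      (∑ I : OIdeal ↥(Pa11d a d), μ I * Tplus q I)
        = ∑ I : OIdeal ↥(Pa11d a d), μ I * Tminus q I := fun q => by
    have h := hts q
    simp only [expect] at h
    rwa [finsum_eq_sum_of_fintype, finsum_eq_sum_of_fintype] at h
  have hsum1 : (∑ I : OIdeal ↥(Pa11d a d), μ I) = 1 := by
    rw [← finsum_eq_sum_of_fintype]
    exact hμ.2
  simp only [expect]
  rw [finsum_eq_sum_of_fintype]
  calc (∑ I : OIdeal ↥(Pa11d a d), μ I * ddeg I)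
      = ∑ I : OIdeal ↥(Pa11d a d), ∑ q : ↥(Pa11d a d), μ I * Tminus q I := by
        apply Finset.sum_congr rfl
        intro I _
        rw [hdd I, Finset.mul_sum]
    _ = ∑ q : ↥(Pa11d a d), ∑ I : OIdeal ↥(Pa11d a d), μ I * Tminus q I := Finset.sum_comm
    _ = ∑ q : ↥(Pa11d a d), (gwt a d q * (∑ I : OIdeal ↥(Pa11d a d), μ I * Tplus q I)
          + (1 - gwt a d q) * (∑ I : OIdeal ↥(Pa11d a d), μ I * Tminus q I)) := by
        apply Finset.sum_congr rfl
        intro q _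
        rw [hts' q]
        ring
    _ = ∑ q : ↥(Pa11d a d), ∑ I : OIdeal ↥(Pa11d a d), μ I * phiFn a d I q := by
        apply Finset.sum_congr rfl
        intro q _
        rw [Finset.mul_sum, Finset.mul_sum, ← Finset.sum_add_distrib]
        apply Finset.sum_congr rfl
        intro I _
        simp only [phiFn]
        ring
    _ = ∑ I : OIdeal ↥(Pa11d a d), ∑ q : ↥(Pa11d a d), μ I * phiFn a d I q := Finset.sum_comm
    _ = ∑ I : OIdeal ↥(Pa11d a d), μ I := by
        apply Finset.sum_congr rfl
        intro I _
        rw [← Finset.mul_sum, hkey I, mul_one]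
    _ = 1 := hsum1


end CDEPaper

namespace CDEPaper

/-- Proposition `prop:posabcdcde`.  For all positive integers `a` and `d`,
the distributive lattice `J(P_{a,1,1,d})` is tCDE with edge density `1`: `E(μ; ddeg) = 1` for
every toggle-symmetric probability distribution `μ` on `J(P_{a,1,1,d})`. -/
theorem statement14 (a d : ℕ) (ha : 1 ≤ a) (hd : 1 ≤ d) :
    (∀ μ : OIdeal ↥(Pa11d a d) → ℝ, IsProbDist μ → ToggleSymmetric μ →
        expect μ ddeg = 1) ∧
      expect (uni (OIdeal ↥(Pa11d a d))) ddeg = 1 := by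
  haveI : Finite ↥(Pa11d a d) := (Pa11d_finite a d).to_subtype
  haveI : Nonempty (OIdeal ↥(Pa11d a d)) := oideal_nonempty
  constructor
  · intro μ hμ hts
    exact main_calc a d ha hd μ hμ hts
  · exact main_calc a d ha hd _ uni_isProbDist toggleSymmetric_uni

end CDEPaper
end
end

section
/- Let P be a finite ranked poset and σ a permutation of {0, 1, ..., r} where r is the maximum rank of P. Let O be an orbit of the rank-permuted rowmotion Φ_{row(σ)} acting on J(P). Then the probability distribution on J(P) that is uniform on O and zero outside of O is toggle-symmetric. Equivalently, for every p ∈ P, the signed toggleability statistic T_p := T⁺_p − T⁻_p has average 0 along every Φ_{row(σ)}-orbit. -/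
open scoped Classical

noncomputable section

namespace CDEPaper

section StatementEighteenAux

variable {α : Type*} [PartialOrder α]

lemma mem_toggle_of_ne {p x : α} (hx : x ≠ p) (J : OIdeal α) :
    x ∈ (toggle p J).1 ↔ x ∈ J.1 := by
  rw [toggle]
  split_ifs <;> simp [Set.mem_union, Set.mem_diff, hx]

lemma mem_applyToggles_of_not_mem {x : α} {L : List α} (hx : x ∉ L) (J : OIdeal α) :
    x ∈ (applyToggles L J).1 ↔ x ∈ J.1 := by
  induction L generalizing J with
  | nil => exact Iff.rfl
  | cons q L ih =>
    simp only [List.mem_cons, not_or] at hx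
    exact (ih hx.2 (toggle q J)).trans (mem_toggle_of_ne hx.1 J)

lemma toggle_eq1 {p : α} {J : OIdeal α} (h : p ∉ J.1 ∧ IsLowerSet (J.1 ∪ {p})) :
    toggle p J = ⟨J.1 ∪ {p}, h.2⟩ := by rw [toggle, dif_pos h]

lemma toggle_eq2 {p : α} {J : OIdeal α} (h1 : ¬(p ∉ J.1 ∧ IsLowerSet (J.1 ∪ {p})))
    (h : p ∈ J.1 ∧ IsLowerSet (J.1 \ {p})) :
    toggle p J = ⟨J.1 \ {p}, h.2⟩ := by rw [toggle, dif_neg h1, dif_pos h]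

lemma toggle_eq3 {p : α} {J : OIdeal α} (h1 : ¬(p ∉ J.1 ∧ IsLowerSet (J.1 ∪ {p})))
    (h2 : ¬(p ∈ J.1 ∧ IsLowerSet (J.1 \ {p}))) :
    toggle p J = J := by rw [toggle, dif_neg h1, dif_neg h2]

lemma toggle_in_iff {p : α} {J : OIdeal α} :
    (p ∉ J.1 ∧ p ∈ (toggle p J).1) ↔ (p ∉ J.1 ∧ IsLowerSet (J.1 ∪ {p})) := by
  constructor
  · rintro ⟨hpJ, hpT⟩
    refine ⟨hpJ, ?_⟩
    by_cases h1 : p ∉ J.1 ∧ IsLowerSet (J.1 ∪ {p})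
    · exact h1.2
    · by_cases h2 : p ∈ J.1 ∧ IsLowerSet (J.1 \ {p})
      · exact absurd h2.1 hpJ
      · rw [toggle_eq3 h1 h2] at hpT; exact absurd hpT hpJ
  · rintro h
    refine ⟨h.1, ?_⟩
    rw [toggle_eq1 h]
    exact Or.inr rfl

lemma toggle_out_iff {p : α} {J : OIdeal α} :
    (p ∈ J.1 ∧ p ∉ (toggle p J).1) ↔ (p ∈ J.1 ∧ IsLowerSet (J.1 \ {p})) := by
  constructor
  · rintro ⟨hpJ, hpT⟩
    refine ⟨hpJ, ?_⟩
    by_cases h2 : p ∈ J.1 ∧ IsLowerSet (J.1 \ {p})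
    · exact h2.2
    · rw [toggle_eq3 (fun h => h.1 hpJ) h2] at hpT; exact absurd hpJ hpT
  · rintro h
    refine ⟨h.1, ?_⟩
    rw [toggle_eq2 (fun h' => h'.1 h.1) h]
    exact fun hc => hc.2 rfl

lemma exists_le_covBy_fin {α : Type*} [PartialOrder α] [Finite α] {a b : α} (h : a < b) :
    ∃ c, a ≤ c ∧ c ⋖ b := by
  classical
  letI : Fintype α := Fintype.ofFinite α
  letI : LocallyFiniteOrder α := Fintype.toLocallyFiniteOrder
  exact exists_le_covBy_of_lt h

lemma exists_covBy_le_fin {α : Type*} [PartialOrder α] [Finite α] {a b : α} (h : a < b) :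
    ∃ c, a ⋖ c ∧ c ≤ b := by
  classical
  letI : Fintype α := Fintype.ofFinite α
  letI : LocallyFiniteOrder α := Fintype.toLocallyFiniteOrder
  exact exists_covBy_le_of_lt h

lemma lowerSet_union_iff [Finite α] {p : α} {J : OIdeal α} (hp : p ∉ J.1) :
    IsLowerSet (J.1 ∪ {p}) ↔ ∀ q, q ⋖ p → q ∈ J.1 := by
  constructor
  · intro h q hq
    have hm : q ∈ J.1 ∪ {p} := h hq.le (Or.inr rfl)
    rcases hm with hm | hm
    · exact hm
    · exact absurd hm hq.ne
  · intro h a b hab hb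
    rcases hb with hb | hb
    · exact Or.inl (J.2 hab hb)
    · rcases eq_or_lt_of_le (le_of_le_of_eq hab hb) with he | hlt
      · exact Or.inr he
      · obtain ⟨c, hac, hcp⟩ := exists_le_covBy_fin hlt
        exact Or.inl (J.2 hac (h c hcp))

lemma lowerSet_diff_iff [Finite α] {p : α} {J : OIdeal α} (hp : p ∈ J.1) :
    IsLowerSet (J.1 \ {p}) ↔ ∀ s, p ⋖ s → s ∉ J.1 := by
  constructor
  · intro h s hs hsJ
    have hm : s ∈ J.1 \ {p} := ⟨hsJ, hs.ne'⟩
    exact (h hs.le hm).2 rfl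
  · intro h a b hab hb
    refine ⟨J.2 hab hb.1, ?_⟩
    intro hmem
    have hbp : b = p := hmem
    have hap : a ≠ p := fun he => hb.2 he
    have hlt : p < a := lt_of_le_of_ne (hbp ▸ hab) (fun he => hap he.symm)
    obtain ⟨s, hps, hsa⟩ := exists_covBy_le_fin hlt
    exact h s hps (J.2 hsa hb.1)

lemma toggle_invol (p : α) : Function.Involutive (toggle p) := by
  intro J
  by_cases h1 : p ∉ J.1 ∧ IsLowerSet (J.1 ∪ {p})
  · have e1 := toggle_eq1 h1
    have hp : p ∈ (toggle p J).1 := by rw [e1]; exact Or.inr rfl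
    have hset : (toggle p J).1 \ {p} = J.1 := by
      rw [e1]
      ext x
      simp only [Set.mem_diff, Set.mem_union, Set.mem_singleton_iff]
      constructor
      · rintro ⟨hx | hx, hne⟩
        · exact hx
        · exact absurd hx hne
      · intro hx
        exact ⟨Or.inl hx, fun he => h1.1 (he ▸ hx)⟩
    have h2 : p ∈ (toggle p J).1 ∧ IsLowerSet ((toggle p J).1 \ {p}) :=
      ⟨hp, hset ▸ J.2⟩
    rw [toggle_eq2 (fun h => h.1 hp) h2]
    exact Subtype.ext hset
  · by_cases h2 : p ∈ J.1 ∧ IsLowerSet (J.1 \ {p})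
    · have e2 := toggle_eq2 h1 h2
      have hp : p ∉ (toggle p J).1 := by rw [e2]; exact fun hc => hc.2 rfl
      have hset : (toggle p J).1 ∪ {p} = J.1 := by
        rw [e2]
        ext x
        simp only [Set.mem_diff, Set.mem_union, Set.mem_singleton_iff]
        constructor
        · rintro (⟨hx, _⟩ | rfl)
          · exact hx
          · exact h2.1
        · intro hx
          by_cases he : x = p
          · exact Or.inr he
          · exact Or.inl ⟨hx, he⟩
      have h1' : p ∉ (toggle p J).1 ∧ IsLowerSet ((toggle p J).1 ∪ {p}) :=
        ⟨hp, hset ▸ J.2⟩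
      rw [toggle_eq1 h1']
      exact Subtype.ext hset
    · rw [toggle_eq3 h1 h2, toggle_eq3 h1 h2]

lemma applyToggles_injective (L : List α) : Function.Injective (applyToggles L) := by
  induction L with
  | nil => exact fun a b h => h
  | cons q L ih =>
    intro a b h
    exact (toggle_invol q).injective (ih h)

section KeyLemmas

variable {α : Type*} [Finite α] [PartialOrder α] {p : α} {L₁ L₂ : List α}

lemma applyToggles_decomp (p : α) (L₁ L₂ : List α) (I : OIdeal α) :
    applyToggles (L₁ ++ p :: L₂) I = applyToggles L₂ (toggle p (applyToggles L₁ I)) := by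
  rw [applyToggles, applyToggles, applyToggles, List.foldl_append, List.foldl_cons]

lemma key_plus_A (hp1 : p ∉ L₁) (hp2 : p ∉ L₂) (hcovs : ∀ q, q ⋖ p → q ∉ L₁)
    (I : OIdeal α) :
    (p ∉ I.1 ∧ IsLowerSet (I.1 ∪ {p})) ↔
      (p ∉ I.1 ∧ p ∈ (applyToggles (L₁ ++ p :: L₂) I).1) := by
  set J := applyToggles L₁ I with hJ
  have hΦ := applyToggles_decomp p L₁ L₂ I
  have hpJ : p ∈ J.1 ↔ p ∈ I.1 := mem_applyToggles_of_not_mem hp1 I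
  have hpΦ : p ∈ (applyToggles (L₁ ++ p :: L₂) I).1 ↔ p ∈ (toggle p J).1 := by
    rw [hΦ]; exact mem_applyToggles_of_not_mem hp2 _
  have hqJ : ∀ q, q ⋖ p → (q ∈ J.1 ↔ q ∈ I.1) :=
    fun q hq => mem_applyToggles_of_not_mem (hcovs q hq) I
  constructor
  · rintro ⟨hpI, hlow⟩
    have hpJ' : p ∉ J.1 := fun h => hpI (hpJ.mp h)
    have hcondJ : p ∉ J.1 ∧ IsLowerSet (J.1 ∪ {p}) :=
      ⟨hpJ', (lowerSet_union_iff hpJ').mpr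
        (fun q hq => (hqJ q hq).mpr (((lowerSet_union_iff hpI).mp hlow) q hq))⟩
    refine ⟨hpI, hpΦ.mpr ?_⟩
    rw [toggle_eq1 hcondJ]
    exact Or.inr rfl
  · rintro ⟨hpI, hpPhi⟩
    have hpJ' : p ∉ J.1 := fun h => hpI (hpJ.mp h)
    have hcond := toggle_in_iff.mp ⟨hpJ', hpΦ.mp hpPhi⟩
    exact ⟨hpI, (lowerSet_union_iff hpI).mpr
      (fun q hq => (hqJ q hq).mp (((lowerSet_union_iff hpJ').mp hcond.2) q hq))⟩

lemma key_plus_B (hp1 : p ∉ L₁) (hp2 : p ∉ L₂) (hcovs : ∀ q, q ⋖ p → q ∉ L₂)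
    (I : OIdeal α) :
    (p ∉ (applyToggles (L₁ ++ p :: L₂) I).1 ∧
      IsLowerSet ((applyToggles (L₁ ++ p :: L₂) I).1 ∪ {p})) ↔
      (p ∈ I.1 ∧ p ∉ (applyToggles (L₁ ++ p :: L₂) I).1) := by
  set J := applyToggles L₁ I with hJ
  have hΦ := applyToggles_decomp p L₁ L₂ I
  have hpJ : p ∈ J.1 ↔ p ∈ I.1 := mem_applyToggles_of_not_mem hp1 I
  have hpΦ : p ∈ (applyToggles (L₁ ++ p :: L₂) I).1 ↔ p ∈ (toggle p J).1 := by
    rw [hΦ]; exact mem_applyToggles_of_not_mem hp2 _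
  have hqΦ : ∀ q, q ⋖ p → (q ∈ (applyToggles (L₁ ++ p :: L₂) I).1 ↔ q ∈ J.1) := by
    intro q hq
    rw [hΦ]
    exact (mem_applyToggles_of_not_mem (hcovs q hq) _).trans (mem_toggle_of_ne hq.ne _)
  constructor
  · rintro ⟨hpPhi, hlow⟩
    have hq : ∀ q, q ⋖ p → q ∈ J.1 :=
      fun q hq' => (hqΦ q hq').mp (((lowerSet_union_iff hpPhi).mp hlow) q hq')
    by_cases hpI : p ∈ I.1
    · exact ⟨hpI, hpPhi⟩
    · exfalso
      have hpJ' : p ∉ J.1 := fun h => hpI (hpJ.mp h)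
      have hcondJ : p ∉ J.1 ∧ IsLowerSet (J.1 ∪ {p}) :=
        ⟨hpJ', (lowerSet_union_iff hpJ').mpr hq⟩
      apply hpPhi
      rw [hpΦ, toggle_eq1 hcondJ]
      exact Or.inr rfl
  · rintro ⟨hpI, hpPhi⟩
    have hpJmem : p ∈ J.1 := hpJ.mpr hpI
    refine ⟨hpPhi, (lowerSet_union_iff hpPhi).mpr ?_⟩
    exact fun q hq => (hqΦ q hq).mpr (J.2 hq.le hpJmem)

lemma key_minus_A (hp1 : p ∉ L₁) (hp2 : p ∉ L₂) (hcovs : ∀ s, p ⋖ s → s ∉ L₁)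
    (I : OIdeal α) :
    (p ∈ I.1 ∧ IsLowerSet (I.1 \ {p})) ↔
      (p ∈ I.1 ∧ p ∉ (applyToggles (L₁ ++ p :: L₂) I).1) := by
  set J := applyToggles L₁ I with hJ
  have hΦ := applyToggles_decomp p L₁ L₂ I
  have hpJ : p ∈ J.1 ↔ p ∈ I.1 := mem_applyToggles_of_not_mem hp1 I
  have hpΦ : p ∈ (applyToggles (L₁ ++ p :: L₂) I).1 ↔ p ∈ (toggle p J).1 := by
    rw [hΦ]; exact mem_applyToggles_of_not_mem hp2 _
  have hsJ : ∀ s, p ⋖ s → (s ∈ J.1 ↔ s ∈ I.1) :=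
    fun s hs => mem_applyToggles_of_not_mem (hcovs s hs) I
  constructor
  · rintro ⟨hpI, hlow⟩
    have hpJmem : p ∈ J.1 := hpJ.mpr hpI
    have hcondJ : p ∈ J.1 ∧ IsLowerSet (J.1 \ {p}) :=
      ⟨hpJmem, (lowerSet_diff_iff hpJmem).mpr
        (fun s hs hsmem => ((lowerSet_diff_iff hpI).mp hlow) s hs ((hsJ s hs).mp hsmem))⟩
    refine ⟨hpI, ?_⟩
    rw [hpΦ, toggle_eq2 (fun h => h.1 hpJmem) hcondJ]
    exact fun hc => hc.2 rfl
  · rintro ⟨hpI, hpPhi⟩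
    have hpJmem : p ∈ J.1 := hpJ.mpr hpI
    have hcond := toggle_out_iff.mp ⟨hpJmem, fun h => hpPhi (hpΦ.mpr h)⟩
    refine ⟨hpI, (lowerSet_diff_iff hpI).mpr ?_⟩
    exact fun s hs hsmem =>
      ((lowerSet_diff_iff hpJmem).mp hcond.2) s hs ((hsJ s hs).mpr hsmem)

lemma key_minus_B (hp1 : p ∉ L₁) (hp2 : p ∉ L₂) (hcovs : ∀ s, p ⋖ s → s ∉ L₂)
    (I : OIdeal α) :
    (p ∈ (applyToggles (L₁ ++ p :: L₂) I).1 ∧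
      IsLowerSet ((applyToggles (L₁ ++ p :: L₂) I).1 \ {p})) ↔
      (p ∉ I.1 ∧ p ∈ (applyToggles (L₁ ++ p :: L₂) I).1) := by
  set J := applyToggles L₁ I with hJ
  have hΦ := applyToggles_decomp p L₁ L₂ I
  have hpJ : p ∈ J.1 ↔ p ∈ I.1 := mem_applyToggles_of_not_mem hp1 I
  have hpΦ : p ∈ (applyToggles (L₁ ++ p :: L₂) I).1 ↔ p ∈ (toggle p J).1 := by
    rw [hΦ]; exact mem_applyToggles_of_not_mem hp2 _
  have hsΦ : ∀ s, p ⋖ s → (s ∈ (applyToggles (L₁ ++ p :: L₂) I).1 ↔ s ∈ J.1) := by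
    intro s hs
    rw [hΦ]
    exact (mem_applyToggles_of_not_mem (hcovs s hs) _).trans (mem_toggle_of_ne hs.ne' _)
  constructor
  · rintro ⟨hpPhi, hlow⟩
    have hs : ∀ s, p ⋖ s → s ∉ J.1 :=
      fun s hs' hsmem =>
        ((lowerSet_diff_iff hpPhi).mp hlow) s hs' ((hsΦ s hs').mpr hsmem)
    by_cases hpI : p ∈ I.1
    · exfalso
      have hpJmem : p ∈ J.1 := hpJ.mpr hpI
      have hcondJ : p ∈ J.1 ∧ IsLowerSet (J.1 \ {p}) :=
        ⟨hpJmem, (lowerSet_diff_iff hpJmem).mpr hs⟩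
      have : p ∉ (toggle p J).1 := by
        rw [toggle_eq2 (fun h => h.1 hpJmem) hcondJ]
        exact fun hc => hc.2 rfl
      exact this (hpΦ.mp hpPhi)
    · exact ⟨hpI, hpPhi⟩
  · rintro ⟨hpI, hpPhi⟩
    have hpJ' : p ∉ J.1 := fun h => hpI (hpJ.mp h)
    refine ⟨hpPhi, (lowerSet_diff_iff hpPhi).mpr ?_⟩
    intro s hs hsmem
    exact hpJ' (J.2 hs.le ((hsΦ s hs).mp hsmem))

end KeyLemmas

section CycleSum

lemma period_of_eq {β : Type*} {Φ : β → β} (hinj : Function.Injective Φ) {x : β} {a b : ℕ}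
    (h : a < b) (he : Φ^[a] x = Φ^[b] x) : Φ^[b - a] x = x := by
  have h2 : Φ^[a] (Φ^[b - a] x) = Φ^[a] x := by
    rw [← Function.iterate_add_apply, show a + (b - a) = b by omega]
    exact he.symm
  exact hinj.iterate a h2

lemma cycle_sum_eq {β : Type*} (Φ : β → β) (x : β) (n : ℕ) (hper : Φ^[n] x = x)
    (m : β → Prop) (fplus fminus : β → ℝ)
    (hfp : (∀ I, fplus I = if ¬m I ∧ m (Φ I) then 1 else 0) ∨
          (∀ I, fplus (Φ I) = if m I ∧ ¬m (Φ I) then 1 else 0))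
    (hfm : (∀ I, fminus I = if m I ∧ ¬m (Φ I) then 1 else 0) ∨
          (∀ I, fminus (Φ I) = if ¬m I ∧ m (Φ I) then 1 else 0)) :
    ∑ k ∈ Finset.range n, fplus (Φ^[k] x) = ∑ k ∈ Finset.range n, fminus (Φ^[k] x) := by
  classical
  set g : ℕ → ℝ := fun k => if m (Φ^[k] x) then 1 else 0 with hg
  have hgn : g n = g 0 := by
    simp only [hg, hper, Function.iterate_zero_apply]; exact if_congr Iff.rfl rfl rfl
  have hshift : ∀ F : β → ℝ, ∑ k ∈ Finset.range n, F (Φ^[k + 1] x) =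
      ∑ k ∈ Finset.range n, F (Φ^[k] x) := by
    intro F
    have h1 := Finset.sum_range_succ' (fun k => F (Φ^[k] x)) n
    have h2 := Finset.sum_range_succ (fun k => F (Φ^[k] x)) n
    rw [hper] at h2
    simp only [Function.iterate_zero_apply] at h1 h2
    rw [h2] at h1
    linarith
  have hsucc : ∀ k, Φ^[k + 1] x = Φ (Φ^[k] x) := fun k => Function.iterate_succ_apply' Φ k x
  have hio : ∑ k ∈ Finset.range n, (if ¬m (Φ^[k] x) ∧ m (Φ^[k + 1] x) then (1 : ℝ) else 0) =
      ∑ k ∈ Finset.range n, (if m (Φ^[k] x) ∧ ¬m (Φ^[k + 1] x) then (1 : ℝ) else 0) := by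
    have key : ∀ k, (if ¬m (Φ^[k] x) ∧ m (Φ^[k + 1] x) then (1 : ℝ) else 0) -
        (if m (Φ^[k] x) ∧ ¬m (Φ^[k + 1] x) then (1 : ℝ) else 0) = g (k + 1) - g k := by
      intro k
      by_cases h1 : m (Φ^[k] x) <;> by_cases h2 : m (Φ^[k + 1] x) <;>
        simp [hg, h1, h2, -Function.iterate_succ, -Function.iterate_succ_apply]
    have h4 : ∑ k ∈ Finset.range n,
        ((if ¬m (Φ^[k] x) ∧ m (Φ^[k + 1] x) then (1 : ℝ) else 0) -
          (if m (Φ^[k] x) ∧ ¬m (Φ^[k + 1] x) then (1 : ℝ) else 0)) = 0 := by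
      rw [Finset.sum_congr rfl fun k _ => key k, Finset.sum_range_sub g n, hgn, sub_self]
    rw [Finset.sum_sub_distrib] at h4
    linarith
  have hplusval : ∑ k ∈ Finset.range n, fplus (Φ^[k] x) =
      ∑ k ∈ Finset.range n, (if ¬m (Φ^[k] x) ∧ m (Φ^[k + 1] x) then (1 : ℝ) else 0) := by
    rcases hfp with h | h
    · refine Finset.sum_congr rfl fun k _ => ?_
      rw [h (Φ^[k] x), hsucc k]
    · rw [← hshift fplus]
      rw [Finset.sum_congr rfl fun k _ => by rw [hsucc k, h (Φ^[k] x)]]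
      rw [Finset.sum_congr rfl fun k _ => by rw [← hsucc k]]
      exact hio.symm
  have hminusval : ∑ k ∈ Finset.range n, fminus (Φ^[k] x) =
      ∑ k ∈ Finset.range n, (if m (Φ^[k] x) ∧ ¬m (Φ^[k + 1] x) then (1 : ℝ) else 0) := by
    rcases hfm with h | h
    · refine Finset.sum_congr rfl fun k _ => ?_
      rw [h (Φ^[k] x), hsucc k]
    · rw [← hshift fminus]
      rw [Finset.sum_congr rfl fun k _ => by rw [hsucc k, h (Φ^[k] x)]]
      rw [Finset.sum_congr rfl fun k _ => by rw [← hsucc k]]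
      exact hio
  rw [hplusval, hminusval, hio]

lemma get_append_left'' {β : Type*} (L₁ L₂ : List β) (p : β) {i : ℕ} (hi : i < L₁.length) :
    (L₁ ++ p :: L₂).get ⟨i, by simp; omega⟩ = L₁.get ⟨i, hi⟩ := by
  simp only [List.get_eq_getElem, Fin.val_mk]
  exact List.getElem_append_left hi

lemma get_append_mid {β : Type*} (L₁ L₂ : List β) (p : β) :
    (L₁ ++ p :: L₂).get ⟨0 + L₁.length, by simp⟩ = p := by
  simp only [List.get_eq_getElem, Fin.val_mk]
  rw [← List.getElem_append_right' L₁ (show 0 < (p :: L₂).length by simp)]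
  simp

lemma get_append_right'' {β : Type*} (L₁ L₂ : List β) (p : β) {j : ℕ} (hj : j < L₂.length) :
    (L₁ ++ p :: L₂).get ⟨j + 1 + L₁.length, by simp; omega⟩ = L₂.get ⟨j, hj⟩ := by
  simp only [List.get_eq_getElem, Fin.val_mk]
  rw [← List.getElem_append_right' L₁ (show j + 1 < (p :: L₂).length by simp; omega)]
  simp

end CycleSum

lemma side_dichotomy {α : Type*} (ρ rk : α → ℕ) (p : α) (L₁ L₂ : List α)
    (hinj : ∀ x y, ρ x = ρ y → rk x = rk y)
    (hcongr : ∀ x y, rk x = rk y → ρ x = ρ y)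
    (hF1 : ∀ x ∈ L₁, ρ p ≤ ρ x) (hF2 : ∀ y ∈ L₂, ρ y ≤ ρ p)
    (P : α → Prop)
    (hrkeq : ∀ x y, P x → P y → rk x = rk y)
    (hrkne : ∀ x, P x → rk x ≠ rk p) :
    (∀ x, P x → x ∉ L₁) ∨ (∀ x, P x → x ∉ L₂) := by
  by_cases hA : ∀ x, P x → x ∉ L₁
  · exact Or.inl hA
  · right
    push_neg at hA
    obtain ⟨x₀, hPx₀, hx₀⟩ := hA
    intro x hPx hxL₂
    have h1 := hF1 x₀ hx₀
    have h2 := hF2 x hxL₂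
    have h3 : ρ x = ρ x₀ := hcongr _ _ (hrkeq x x₀ hPx hPx₀)
    have h4 : ρ x = ρ p := le_antisymm h2 (h3 ▸ h1)
    exact hrkne x hPx (hinj _ _ h4)

end StatementEighteenAux

/-- Lemma `lem:gengyrmotiontogsym`.  Let `P` be a finite ranked poset with
rank function `rk` taking values in `{0, 1, …, r}`, and let `σ` be a permutation of
`{0, 1, …, r}`.  Let `Φ_{row(σ)} = τ_{σ(0)} ∘ τ_{σ(1)} ∘ ⋯ ∘ τ_{σ(r)}` be the rank-permuted
rowmotion, realized as the composition of the toggles along any list `L` enumerating the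
elements of `P` in which the values `σ⁻¹(rk(·))` are weakly decreasing (so the elements of
rank `σ(r)` are toggled first, then those of rank `σ(r-1)`, etc.; toggles of equal rank
commute).  Then, for any `I₀`, the probability distribution on `J(P)` that is uniform on the
`Φ_{row(σ)}`-orbit of `I₀` and zero outside of it is toggle-symmetric; equivalently, for every
`p ∈ P` the signed toggleability statistic `T_p = T⁺_p - T⁻_p` sums to zero along the orbit. -/


theorem statement18 (α : Type*) [Finite α] [PartialOrder α] (rk : α → ℕ) (r : ℕ)
    (h0 : ∃ p, rk p = 0)
    (hcov : ∀ p q : α, p ⋖ q → rk q = rk p + 1)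
    (hler : ∀ p, rk p ≤ r)
    (σ : Equiv.Perm (Fin (r + 1)))
    (L : List α) (hnodup : L.Nodup) (hfull : ∀ p : α, p ∈ L)
    (horder : ∀ s t : Fin L.length, s ≤ t →
      ((σ.symm ⟨rk (L.get t), Nat.lt_succ_of_le (hler _)⟩ : Fin (r + 1)) : ℕ) ≤
        ((σ.symm ⟨rk (L.get s), Nat.lt_succ_of_le (hler _)⟩ : Fin (r + 1)) : ℕ))
    (I₀ : OIdeal α) :
    ToggleSymmetric (orbitDist (applyToggles L) I₀) ∧
    (∀ p : α,
      (∑ᶠ (J : OIdeal α),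
        if J ∈ orbit (applyToggles L) I₀ then Tplus p J - Tminus p J else 0) = 0) := by
  classical
  haveI : Fintype (OIdeal α) := Fintype.ofFinite _
  have hinj : Function.Injective (applyToggles (α := α) L) := applyToggles_injective L
  have hex : ∃ c, 0 < c ∧ (applyToggles L)^[c] I₀ = I₀ := by
    obtain ⟨a, b, hab, he⟩ :=
      Finite.exists_ne_map_eq_of_infinite (fun k : ℕ => (applyToggles L)^[k] I₀)
    rcases Nat.lt_or_ge a b with h | h
    · exact ⟨b - a, by omega, period_of_eq hinj h he⟩
    · have h' : b < a := by omega
      exact ⟨a - b, by omega, period_of_eq hinj h' he.symm⟩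
  obtain ⟨n, hnpos, hper, hmin⟩ : ∃ n, 0 < n ∧ (applyToggles L)^[n] I₀ = I₀ ∧
      ∀ m, 0 < m → m < n → (applyToggles L)^[m] I₀ ≠ I₀ :=
    ⟨Nat.find hex, (Nat.find_spec hex).1, (Nat.find_spec hex).2, fun m h1 h2 h3 =>
      Nat.find_min hex h2 ⟨h1, h3⟩⟩
  have hmul : ∀ m, (applyToggles L)^[n * m] I₀ = I₀ := by
    intro m
    induction m with
    | zero => simp
    | succ m ih => rw [Nat.mul_succ, Function.iterate_add_apply, hper, ih]
  have hmod : ∀ k, (applyToggles L)^[k] I₀ = (applyToggles L)^[k % n] I₀ := by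
    intro k
    conv_lhs => rw [show k = k % n + n * (k / n) from (Nat.mod_add_div k n).symm]
    rw [Function.iterate_add_apply, hmul]
  have horb : orbit (applyToggles L) I₀ =
      ↑((Finset.range n).image fun k => (applyToggles L)^[k] I₀) := by
    ext y
    simp only [orbit, Set.mem_setOf_eq, Finset.coe_image, Set.mem_image, Finset.mem_coe,
      Finset.mem_range]
    constructor
    · rintro ⟨k, rfl⟩
      exact ⟨k % n, Nat.mod_lt _ hnpos, (hmod k).symm⟩
    · rintro ⟨k, _, rfl⟩
      exact ⟨k, rfl⟩
  have hinjOn : ∀ a ∈ Finset.range n, ∀ b ∈ Finset.range n,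
      (applyToggles L)^[a] I₀ = (applyToggles L)^[b] I₀ → a = b := by
    intro a ha b hb he
    simp only [Finset.mem_range] at ha hb
    by_contra hne
    rcases Nat.lt_or_ge a b with h | h
    · exact hmin (b - a) (by omega) (by omega) (period_of_eq hinj h he)
    · exact hmin (a - b) (by omega) (by omega) (period_of_eq hinj (by omega) he.symm)
  have hsum : ∀ F : OIdeal α → ℝ,
      (∑ᶠ J, if J ∈ orbit (applyToggles L) I₀ then F J else 0) =
        ∑ k ∈ Finset.range n, F ((applyToggles L)^[k] I₀) := by
    intro F
    rw [finsum_eq_sum_of_fintype]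
    have hcg : ∀ J : OIdeal α, (if J ∈ orbit (applyToggles L) I₀ then F J else 0) =
        (if J ∈ (Finset.range n).image (fun k => (applyToggles L)^[k] I₀) then F J else 0) := by
      intro J
      refine if_congr ?_ rfl rfl
      rw [horb, Finset.mem_coe]
    rw [Finset.sum_congr rfl fun J _ => hcg J, Finset.sum_ite_mem, Finset.univ_inter,
      Finset.sum_image hinjOn]
  have hcore : ∀ p : α, ∑ k ∈ Finset.range n, Tplus p ((applyToggles L)^[k] I₀) =
      ∑ k ∈ Finset.range n, Tminus p ((applyToggles L)^[k] I₀) := by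
    intro p
    obtain ⟨L₁, L₂, hL⟩ := List.append_of_mem (hfull p)
    subst hL
    have hd := List.nodup_append.mp hnodup
    have hp1 : p ∉ L₁ := fun h => hd.2.2 p h p List.mem_cons_self rfl
    have hp2 : p ∉ L₂ := (List.nodup_cons.mp hd.2.1).1
    have hρinj : ∀ x y : α,
        ((σ.symm ⟨rk x, Nat.lt_succ_of_le (hler x)⟩ : Fin (r + 1)) : ℕ) =
          ((σ.symm ⟨rk y, Nat.lt_succ_of_le (hler y)⟩ : Fin (r + 1)) : ℕ) → rk x = rk y := by
      intro x y h
      have h2 := σ.symm.injective (Fin.val_injective h)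
      exact Fin.mk_eq_mk.mp h2
    have hρcongr : ∀ x y : α, rk x = rk y →
        ((σ.symm ⟨rk x, Nat.lt_succ_of_le (hler x)⟩ : Fin (r + 1)) : ℕ) =
          ((σ.symm ⟨rk y, Nat.lt_succ_of_le (hler y)⟩ : Fin (r + 1)) : ℕ) := by
      intro x y h
      have h2 : (⟨rk x, Nat.lt_succ_of_le (hler x)⟩ : Fin (r + 1)) =
          ⟨rk y, Nat.lt_succ_of_le (hler y)⟩ := Fin.mk_eq_mk.mpr h
      rw [h2]
    have hF1 : ∀ x ∈ L₁,
        ((σ.symm ⟨rk p, Nat.lt_succ_of_le (hler p)⟩ : Fin (r + 1)) : ℕ) ≤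
          ((σ.symm ⟨rk x, Nat.lt_succ_of_le (hler x)⟩ : Fin (r + 1)) : ℕ) := by
      intro x hx
      obtain ⟨⟨i, hi⟩, hgx⟩ := List.mem_iff_get.mp hx
      have h := horder ⟨i, by simp; omega⟩ ⟨0 + L₁.length, by simp⟩
        (Fin.mk_le_mk.mpr (by omega))
      rw [get_append_mid L₁ L₂ p, get_append_left'' L₁ L₂ p hi, hgx] at h
      exact h
    have hF2 : ∀ y ∈ L₂,
        ((σ.symm ⟨rk y, Nat.lt_succ_of_le (hler y)⟩ : Fin (r + 1)) : ℕ) ≤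
          ((σ.symm ⟨rk p, Nat.lt_succ_of_le (hler p)⟩ : Fin (r + 1)) : ℕ) := by
      intro y hy
      obtain ⟨⟨j, hj⟩, hgy⟩ := List.mem_iff_get.mp hy
      have h := horder ⟨0 + L₁.length, by simp⟩ ⟨j + 1 + L₁.length, by simp; omega⟩
        (Fin.mk_le_mk.mpr (by omega))
      rw [get_append_mid L₁ L₂ p, get_append_right'' L₁ L₂ p hj, hgy] at h
      exact h
    have hlower := side_dichotomy
      (fun x => ((σ.symm ⟨rk x, Nat.lt_succ_of_le (hler x)⟩ : Fin (r + 1)) : ℕ)) rk p L₁ L₂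
      hρinj hρcongr hF1 hF2 (· ⋖ p)
      (fun x y hx hy => by have h1 := hcov x p hx; have h2 := hcov y p hy; omega)
      (fun x hx => by have h1 := hcov x p hx; omega)
    have hupper := side_dichotomy
      (fun x => ((σ.symm ⟨rk x, Nat.lt_succ_of_le (hler x)⟩ : Fin (r + 1)) : ℕ)) rk p L₁ L₂
      hρinj hρcongr hF1 hF2 (p ⋖ ·)
      (fun x y hx hy => by have h1 := hcov p x hx; have h2 := hcov p y hy; omega)
      (fun x hx => by have h1 := hcov p x hx; omega)
    refine cycle_sum_eq (applyToggles (L₁ ++ p :: L₂)) I₀ n hper (fun I => p ∈ I.1)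
      (Tplus p) (Tminus p) ?_ ?_
    · rcases hlower with hA | hB
      · left
        intro I
        simp only [Tplus]
        exact if_congr (key_plus_A hp1 hp2 hA I) rfl rfl
      · right
        intro I
        simp only [Tplus]
        exact if_congr (key_plus_B hp1 hp2 hB I) rfl rfl
    · rcases hupper with hA | hB
      · left
        intro I
        simp only [Tminus]
        exact if_congr (key_minus_A hp1 hp2 hA I) rfl rfl
      · right
        intro I
        simp only [Tminus]
        exact if_congr (key_minus_B hp1 hp2 hB I) rfl rfl
  have htrans : ∀ f : OIdeal α → ℝ, expect (orbitDist (applyToggles L) I₀) f =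
      ((Nat.card ↥(orbit (applyToggles L) I₀) : ℝ))⁻¹ *
        ∑ k ∈ Finset.range n, f ((applyToggles L)^[k] I₀) := by
    intro f
    rw [expect]
    have hcg : ∀ J, orbitDist (applyToggles L) I₀ J * f J =
        (if J ∈ orbit (applyToggles L) I₀ then
          ((Nat.card ↥(orbit (applyToggles L) I₀) : ℝ))⁻¹ * f J else 0) := by
      intro J
      rw [orbitDist]
      split_ifs <;> simp
    rw [finsum_congr hcg, hsum (fun J => ((Nat.card ↥(orbit (applyToggles L) I₀) : ℝ))⁻¹ * f J),
      ← Finset.mul_sum]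
  constructor
  · intro p
    rw [htrans (Tplus p), htrans (Tminus p), hcore p]
  · intro p
    rw [hsum (fun J => Tplus p J - Tminus p J), Finset.sum_sub_distrib, hcore p, sub_self]

end CDEPaper
end
end

section
/- Let P be a finite poset such that J(P) is tCDE with edge density c. Then the antichain cardinality statistic I ↦ #max(I) is c-mesic with respect to the action of rowmotion Φ_row on J(P): the average of #max(I) over every Φ_row-orbit equals c. If moreover P is ranked, then for every permutation σ of the ranks of P, the antichain cardinality statistic is also c-mesic with respect to the action of the rank-permuted rowmotion Φ_{row(σ)} on J(P). -/
open scoped Classical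

noncomputable section

namespace CDEPaper


/-! ### Auxiliary results -/

section Aux1

variable {α : Type*} [PartialOrder α]

lemma lower_union_iff {I : Set α} (hI : IsLowerSet I) (p : α) :
    IsLowerSet (I ∪ {p}) ↔ ∀ z, z < p → z ∈ I := by
  constructor
  · intro h z hz
    rcases h hz.le (Set.mem_union_right _ rfl) with h' | h'
    · exact h'
    · exact absurd h' (by simp [hz.ne])
  · intro h x y hyx hx
    rcases hx with hx | hx
    · exact Set.mem_union_left _ (hI hyx hx)
    · have hx' : x = p := hx
      subst hx'
      rcases eq_or_lt_of_le hyx with h' | h'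
      · exact Set.mem_union_right _ (by simp [h'])
      · exact Set.mem_union_left _ (h _ h')

lemma lower_diff_iff {I : Set α} (hI : IsLowerSet I) (p : α) :
    IsLowerSet (I \ {p}) ↔ ∀ z, p < z → z ∉ I := by
  constructor
  · intro h z hz hzI
    have : p ∈ I \ {p} := h hz.le ⟨hzI, by simp [hz.ne']⟩
    exact this.2 rfl
  · intro h x y hyx hx
    refine ⟨hI hyx hx.1, ?_⟩
    intro hy
    have hy' : y = p := hy
    subst hy'
    rcases eq_or_lt_of_le hyx with h' | h'
    · exact hx.2 (by simp [h'.symm])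
    · exact h _ h' hx.1

lemma Tplus_eq_one_iff (p : α) (I : OIdeal α) :
    Tplus p I = 1 ↔ (p ∉ I.1 ∧ ∀ z, z < p → z ∈ I.1) := by
  rw [Tplus]
  split
  · next h => simp only [iff_true, eq_self_iff_true, true_iff]
              exact ⟨h.1, (lower_union_iff I.2 p).1 h.2⟩
  · next h => constructor
              · intro h1; norm_num at h1
              · intro hh; exact absurd ⟨hh.1, (lower_union_iff I.2 p).2 hh.2⟩ h

lemma Tminus_eq_one_iff (p : α) (I : OIdeal α) :
    Tminus p I = 1 ↔ (p ∈ I.1 ∧ ∀ z, p < z → z ∉ I.1) := by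
  rw [Tminus]
  split
  · next h => simp only [true_iff]
              exact ⟨h.1, (lower_diff_iff I.2 p).1 h.2⟩
  · next h => constructor
              · intro h1; norm_num at h1
              · intro hh; exact absurd ⟨hh.1, (lower_diff_iff I.2 p).2 hh.2⟩ h


lemma Tplus_eq_zero_or_one (p : α) (I : OIdeal α) : Tplus p I = 0 ∨ Tplus p I = 1 := by
  unfold Tplus; split <;> simp

lemma Tminus_eq_zero_or_one (p : α) (I : OIdeal α) : Tminus p I = 0 ∨ Tminus p I = 1 := by
  unfold Tminus; split <;> simp

lemma toggle_mem_of_ne (p q : α) (I : OIdeal α) (h : q ≠ p) :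
    q ∈ (toggle p I).1 ↔ q ∈ I.1 := by
  unfold toggle
  split
  · simp [h]
  · split
    · simp [h]
    · rfl

lemma toggle_mem_iff (p : α) (I : OIdeal α) :
    p ∈ (toggle p I).1 ↔ (Tplus p I = 1 ∨ (p ∈ I.1 ∧ Tminus p I = 0)) := by
  unfold toggle Tplus Tminus
  split
  · next h => simp [h]
  · next h =>
    split
    · next h' => simp [h', h]
    · next h' => simp_all

lemma toggle_involutive (p : α) (I : OIdeal α) : toggle p (toggle p I) = I := by
  unfold toggle
  by_cases h : p ∉ I.1 ∧ IsLowerSet (I.1 ∪ {p})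
  · rw [dif_pos h]
    have h1 : ¬ (p ∉ (I.1 ∪ {p}) ∧ IsLowerSet ((I.1 ∪ {p}) ∪ {p})) := by simp
    rw [dif_neg h1, dif_pos (by
      refine ⟨Set.mem_union_right _ rfl, ?_⟩
      have : (I.1 ∪ {p}) \ {p} = I.1 := by
        rw [Set.union_diff_distrib]; simp [Set.diff_singleton_eq_self h.1]
      rw [this]; exact I.2)]
    apply Subtype.ext
    show (I.1 ∪ {p}) \ {p} = I.1
    rw [Set.union_diff_distrib]; simp [Set.diff_singleton_eq_self h.1]
  · rw [dif_neg h]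
    by_cases h' : p ∈ I.1 ∧ IsLowerSet (I.1 \ {p})
    · rw [dif_pos h']
      rw [dif_pos (by
        refine ⟨by simp, ?_⟩
        have : (I.1 \ {p}) ∪ {p} = I.1 := by
          rw [Set.diff_union_self]
          exact Set.union_eq_self_of_subset_right (Set.singleton_subset_iff.2 h'.1)
        rw [this]; exact I.2)]
      apply Subtype.ext
      show (I.1 \ {p}) ∪ {p} = I.1
      rw [Set.diff_union_self]
      exact Set.union_eq_self_of_subset_right (Set.singleton_subset_iff.2 h'.1)
    · rw [dif_neg h', dif_neg h, dif_neg h']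

lemma toggle_bijective (p : α) : Function.Bijective (toggle p (α := α)) :=
  Function.Involutive.bijective (toggle_involutive p)

/-- toggle p swaps Tplus p and Tminus p. -/
lemma Tplus_toggle (p : α) (I : OIdeal α) : Tplus p (toggle p I) = Tminus p I := by
  unfold toggle
  by_cases h : p ∉ I.1 ∧ IsLowerSet (I.1 ∪ {p})
  · rw [dif_pos h]
    have : Tminus p I = 0 := by unfold Tminus; rw [if_neg (by tauto)]
    rw [this]
    unfold Tplus; rw [if_neg (by simp)]
  · rw [dif_neg h]
    by_cases h' : p ∈ I.1 ∧ IsLowerSet (I.1 \ {p})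
    · rw [dif_pos h']
      have h2 : Tminus p I = 1 := by unfold Tminus; rw [if_pos h']
      rw [h2]
      rw [Tplus_eq_one_iff]
      constructor
      · simp
      · intro z hz
        have hzI : z ∈ I.1 := I.2 hz.le h'.1
        exact ⟨hzI, by simp [hz.ne]⟩
    · rw [dif_neg h']
      have h2 : Tminus p I = 0 := by unfold Tminus; rw [if_neg h']
      rw [h2]; unfold Tplus; rw [if_neg h]

lemma Tminus_toggle (p : α) (I : OIdeal α) : Tminus p (toggle p I) = Tplus p I := by
  have := Tplus_toggle p (toggle p I)
  rw [toggle_involutive] at this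
  exact this.symm

/-- For q not below p (and ≠ p), toggling q does not affect Tplus p. -/
lemma Tplus_toggle_of_not_lt (p q : α) (hqp : q ≠ p) (h : ¬ q < p) (I : OIdeal α) :
    Tplus p (toggle q I) = Tplus p I := by
  have e1 : p ∈ (toggle q I).1 ↔ p ∈ I.1 := toggle_mem_of_ne q p I (Ne.symm hqp)
  have e2 : ∀ z, z < p → (z ∈ (toggle q I).1 ↔ z ∈ I.1) := by
    intro z hz
    exact toggle_mem_of_ne q z I (by rintro rfl; exact h hz)
  rcases Tplus_eq_zero_or_one p (toggle q I) with h1 | h1 <;>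
    rcases Tplus_eq_zero_or_one p I with h2 | h2 <;> try (rw [h1, h2])
  · rw [Tplus_eq_one_iff] at h2
    have : Tplus p (toggle q I) = 1 := by
      rw [Tplus_eq_one_iff]
      exact ⟨fun hp => h2.1 (e1.1 hp), fun z hz => (e2 z hz).2 (h2.2 z hz)⟩
    rw [h1] at this; norm_num at this
  · rw [Tplus_eq_one_iff] at h1
    have : Tplus p I = 1 := by
      rw [Tplus_eq_one_iff]
      exact ⟨fun hp => h1.1 (e1.2 hp), fun z hz => (e2 z hz).1 (h1.2 z hz)⟩
    rw [h2] at this; norm_num at this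

lemma Tminus_toggle_of_not_lt (p q : α) (hqp : q ≠ p) (h : ¬ p < q) (I : OIdeal α) :
    Tminus p (toggle q I) = Tminus p I := by
  have e1 : p ∈ (toggle q I).1 ↔ p ∈ I.1 := toggle_mem_of_ne q p I (Ne.symm hqp)
  have e2 : ∀ z, p < z → (z ∈ (toggle q I).1 ↔ z ∈ I.1) := by
    intro z hz
    exact toggle_mem_of_ne q z I (by rintro rfl; exact h hz)
  rcases Tminus_eq_zero_or_one p (toggle q I) with h1 | h1 <;>
    rcases Tminus_eq_zero_or_one p I with h2 | h2 <;> try (rw [h1, h2])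
  · rw [Tminus_eq_one_iff] at h2
    have : Tminus p (toggle q I) = 1 := by
      rw [Tminus_eq_one_iff]
      exact ⟨e1.2 h2.1, fun z hz hzm => h2.2 z hz ((e2 z hz).1 hzm)⟩
    rw [h1] at this; norm_num at this
  · rw [Tminus_eq_one_iff] at h1
    have : Tminus p I = 1 := by
      rw [Tminus_eq_one_iff]
      exact ⟨e1.1 h1.1, fun z hz hzm => h1.2 z hz ((e2 z hz).2 hzm)⟩
    rw [h2] at this; norm_num at this



/-- A toggle is a no-op if `q ∈ I` and some strictly larger element is in `I`. -/
lemma toggle_eq_self_of_mem_lt {q w : α} {I : OIdeal α} (hq : q ∈ I.1) (hw : w ∈ I.1)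
    (hlt : q < w) : toggle q I = I := by
  unfold toggle
  rw [dif_neg (fun h => h.1 hq), dif_neg]
  rintro ⟨-, hlow⟩
  rw [lower_diff_iff I.2] at hlow
  exact hlow w hlt hw

/-- A toggle is a no-op if `q ∉ I` and some strictly smaller element is not in `I`. -/
lemma toggle_eq_self_of_not_mem_lt {q w : α} {I : OIdeal α} (hq : q ∉ I.1) (hw : w ∉ I.1)
    (hlt : w < q) : toggle q I = I := by
  unfold toggle
  rw [dif_neg, dif_neg (fun h => hq h.1)]
  rintro ⟨-, hlow⟩
  rw [lower_union_iff I.2] at hlow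
  exact hw (hlow w hlt)

lemma Tplus_toggle_of_not_covby (p q : α) (hqp : q ≠ p) (h : ¬ q ⋖ p) (I : OIdeal α) :
    Tplus p (toggle q I) = Tplus p I := by
  by_cases hlt : q < p
  · obtain ⟨w, hw1, hw2⟩ : ∃ w, q < w ∧ w < p := by
      by_contra hc
      push_neg at hc
      exact h ⟨hlt, fun c h1 h2 => hc c h1 h2⟩
    rcases Tplus_eq_zero_or_one p (toggle q I) with h1 | h1 <;>
      rcases Tplus_eq_zero_or_one p I with h2 | h2
    · rw [h1, h2]
    · have hcond := (Tplus_eq_one_iff p I).1 h2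
      have hwI : w ∈ I.1 := hcond.2 w hw2
      have hqI : q ∈ I.1 := I.2 hw1.le hwI
      rw [toggle_eq_self_of_mem_lt hqI hwI hw1] at h1
      rw [h1] at h2; norm_num at h2
    · have hcond := (Tplus_eq_one_iff p (toggle q I)).1 h1
      have hwT : w ∈ (toggle q I).1 := hcond.2 w hw2
      have hwI : w ∈ I.1 := (toggle_mem_of_ne q w I (ne_of_gt hw1)).1 hwT
      have hqI : q ∈ I.1 := I.2 hw1.le hwI
      rw [toggle_eq_self_of_mem_lt hqI hwI hw1] at h1
      rw [h1] at h2; norm_num at h2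
    · rw [h1, h2]
  · exact Tplus_toggle_of_not_lt p q hqp hlt I

lemma Tminus_toggle_of_not_covby (p q : α) (hqp : q ≠ p) (h : ¬ p ⋖ q) (I : OIdeal α) :
    Tminus p (toggle q I) = Tminus p I := by
  by_cases hlt : p < q
  · obtain ⟨w, hw1, hw2⟩ : ∃ w, p < w ∧ w < q := by
      by_contra hc
      push_neg at hc
      exact h ⟨hlt, fun c h1 h2 => hc c h1 h2⟩
    rcases Tminus_eq_zero_or_one p (toggle q I) with h1 | h1 <;>
      rcases Tminus_eq_zero_or_one p I with h2 | h2
    · rw [h1, h2]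
    · have hcond := (Tminus_eq_one_iff p I).1 h2
      have hwI : w ∉ I.1 := hcond.2 w hw1
      have hqI : q ∉ I.1 := fun hh => hwI (I.2 hw2.le hh)
      rw [toggle_eq_self_of_not_mem_lt hqI hwI hw2] at h1
      rw [h1] at h2; norm_num at h2
    · have hcond := (Tminus_eq_one_iff p (toggle q I)).1 h1
      have hwT : w ∉ (toggle q I).1 := hcond.2 w hw1
      have hwI : w ∉ I.1 := fun hh => hwT ((toggle_mem_of_ne q w I (ne_of_lt hw2)).2 hh)
      have hqI : q ∉ I.1 := fun hh => hwI (I.2 hw2.le hh)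
      rw [toggle_eq_self_of_not_mem_lt hqI hwI hw2] at h1
      rw [h1] at h2; norm_num at h2
    · rw [h1, h2]
  · exact Tminus_toggle_of_not_lt p q hqp hlt I

lemma applyToggles_nil (I : OIdeal α) : applyToggles ([] : List α) I = I := rfl

lemma applyToggles_cons (q : α) (L : List α) (I : OIdeal α) :
    applyToggles (q :: L) I = applyToggles L (toggle q I) := rfl

lemma applyToggles_append (L₁ L₂ : List α) (I : OIdeal α) :
    applyToggles (L₁ ++ L₂) I = applyToggles L₂ (applyToggles L₁ I) :=
  List.foldl_append

lemma applyToggles_bijective (L : List α) : Function.Bijective (applyToggles L (α := α)) := by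
  induction L with
  | nil => exact Function.bijective_id
  | cons q L ih =>
    have : applyToggles (q :: L) (α := α) = (applyToggles L) ∘ (toggle q) := rfl
    rw [this]
    exact ih.comp (toggle_bijective q)

lemma mem_applyToggles_of_not_mem_s19 {p : α} {L : List α} (hp : p ∉ L) (I : OIdeal α) :
    p ∈ (applyToggles L I).1 ↔ p ∈ I.1 := by
  induction L generalizing I with
  | nil => rfl
  | cons q L ih =>
    rw [applyToggles_cons]
    have hpq : p ≠ q := fun h => hp (h ▸ List.mem_cons_self (a := q) (l := L))
    rw [ih (fun h => hp (List.mem_cons_of_mem q h)) (toggle q I)]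
    exact toggle_mem_of_ne q p I hpq

lemma Tplus_applyToggles {p : α} {L : List α} (h : ∀ x ∈ L, x ≠ p ∧ ¬ x ⋖ p) (I : OIdeal α) :
    Tplus p (applyToggles L I) = Tplus p I := by
  induction L generalizing I with
  | nil => rfl
  | cons q L ih =>
    rw [applyToggles_cons, ih (fun x hx => h x (List.mem_cons_of_mem q hx)) (toggle q I)]
    obtain ⟨h1, h2⟩ := h q (List.mem_cons_self (a := q) (l := L))
    exact Tplus_toggle_of_not_covby p q h1 h2 I

lemma Tminus_applyToggles {p : α} {L : List α} (h : ∀ x ∈ L, x ≠ p ∧ ¬ p ⋖ x) (I : OIdeal α) :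
    Tminus p (applyToggles L I) = Tminus p I := by
  induction L generalizing I with
  | nil => rfl
  | cons q L ih =>
    rw [applyToggles_cons, ih (fun x hx => h x (List.mem_cons_of_mem q hx)) (toggle q I)]
    obtain ⟨h1, h2⟩ := h q (List.mem_cons_self (a := q) (l := L))
    exact Tminus_toggle_of_not_covby p q h1 h2 I

lemma Tplus_char (p : α) (L₁ L₂ : List α) (hp1 : p ∉ L₁) (hp2 : p ∉ L₂) (I : OIdeal α) :
    Tplus p (applyToggles L₁ I) =
      if p ∉ I.1 ∧ p ∈ (applyToggles (L₁ ++ p :: L₂) I).1 then 1 else 0 := by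
  set J := applyToggles L₁ I with hJ
  have hΦ : applyToggles (L₁ ++ p :: L₂) I = applyToggles L₂ (toggle p J) := by
    rw [applyToggles_append, applyToggles_cons]
  have hmem2 : p ∈ (applyToggles (L₁ ++ p :: L₂) I).1 ↔ p ∈ (toggle p J).1 := by
    rw [hΦ]; exact mem_applyToggles_of_not_mem_s19 hp2 _
  have hmem1 : p ∈ I.1 ↔ p ∈ J.1 := (mem_applyToggles_of_not_mem_s19 hp1 I).symm
  rcases Tplus_eq_zero_or_one p J with h | h
  · rw [h, if_neg]
    rintro ⟨hpI, hpΦ⟩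
    have hpJ : p ∉ J.1 := fun hh => hpI (hmem1.2 hh)
    have hmem := (toggle_mem_iff p J).1 (hmem2.1 hpΦ)
    rcases hmem with h' | h'
    · rw [h] at h'; norm_num at h'
    · exact hpJ h'.1
  · rw [h, if_pos]
    have hcond := (Tplus_eq_one_iff p J).1 h
    refine ⟨fun hh => hcond.1 (hmem1.1 hh), ?_⟩
    rw [hmem2, toggle_mem_iff]
    exact Or.inl h

lemma Tminus_char (p : α) (L₁ L₂ : List α) (hp1 : p ∉ L₁) (hp2 : p ∉ L₂) (I : OIdeal α) :
    Tminus p (applyToggles L₁ I) =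
      if p ∈ I.1 ∧ p ∉ (applyToggles (L₁ ++ p :: L₂) I).1 then 1 else 0 := by
  set J := applyToggles L₁ I with hJ
  have hΦ : applyToggles (L₁ ++ p :: L₂) I = applyToggles L₂ (toggle p J) := by
    rw [applyToggles_append, applyToggles_cons]
  have hmem2 : p ∈ (applyToggles (L₁ ++ p :: L₂) I).1 ↔ p ∈ (toggle p J).1 := by
    rw [hΦ]; exact mem_applyToggles_of_not_mem_s19 hp2 _
  have hmem1 : p ∈ I.1 ↔ p ∈ J.1 := (mem_applyToggles_of_not_mem_s19 hp1 I).symm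
  rcases Tminus_eq_zero_or_one p J with h | h
  · rw [h, if_neg]
    rintro ⟨hpI, hpΦ⟩
    have hpJ : p ∈ J.1 := hmem1.1 hpI
    have : p ∈ (toggle p J).1 := (toggle_mem_iff p J).2 (Or.inr ⟨hpJ, h⟩)
    exact hpΦ (hmem2.2 this)
  · rw [h, if_pos]
    have hcond := (Tminus_eq_one_iff p J).1 h
    refine ⟨hmem1.2 hcond.1, ?_⟩
    rw [hmem2, toggle_mem_iff]
    rintro (h' | h')
    · have := (Tplus_eq_one_iff p J).1 h'
      exact this.1 hcond.1
    · rw [h] at h'; exact absurd h'.2 (by norm_num)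

end Aux1

section Aux2

variable {β : Type*} [Fintype β] (Φ : β → β) (x : β)

lemma mem_orbit_self : x ∈ orbit Φ x := ⟨0, rfl⟩

lemma mem_orbit_apply {y : β} (hy : y ∈ orbit Φ x) : Φ y ∈ orbit Φ x := by
  obtain ⟨n, rfl⟩ := hy
  exact ⟨n + 1, Function.iterate_succ_apply' Φ n x⟩

lemma exists_period (hΦ : Function.Bijective Φ) : ∃ m : ℕ, 1 ≤ m ∧ Φ^[m] x = x := by
  obtain ⟨a, b, hab, he⟩ := Finite.exists_ne_map_eq_of_infinite (fun n : ℕ => Φ^[n] x)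
  rcases Nat.lt_or_ge a b with h | h
  · refine ⟨b - a, by omega, ?_⟩
    have : Φ^[a] (Φ^[b-a] x) = Φ^[a] x := by
      rw [← Function.iterate_add_apply]
      have : a + (b - a) = b := by omega
      rw [this]; exact he.symm
    exact (hΦ.1.iterate a) this
  · have hba : b < a := by omega
    refine ⟨a - b, by omega, ?_⟩
    have : Φ^[b] (Φ^[a-b] x) = Φ^[b] x := by
      rw [← Function.iterate_add_apply]
      have : b + (a - b) = a := by omega
      rw [this]; exact he
    exact (hΦ.1.iterate b) this

lemma mem_orbit_apply_iff (hΦ : Function.Bijective Φ) {y : β} :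
    Φ y ∈ orbit Φ x ↔ y ∈ orbit Φ x := by
  constructor
  · rintro ⟨n, hn⟩
    rcases Nat.eq_zero_or_pos n with rfl | hpos
    · -- Φ y = x
      obtain ⟨m, hm1, hm⟩ := exists_period Φ x hΦ
      refine ⟨m - 1, hΦ.1 ?_⟩
      have e : Φ (Φ^[m-1] x) = Φ^[m] x := by
        rw [← Function.iterate_succ_apply' Φ (m-1) x]
        congr 1; omega
      rw [e, hm]; exact hn
    · refine ⟨n - 1, hΦ.1 ?_⟩
      have e : Φ (Φ^[n-1] x) = Φ^[n] x := by
        rw [← Function.iterate_succ_apply' Φ (n-1) x]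
        congr 1; omega
      rw [e]; exact hn
  · exact mem_orbit_apply Φ x

lemma orbit_sum (hΦ : Function.Bijective Φ) (f : β → ℝ) :
    ∑ y ∈ (orbit Φ x).toFinset, f (Φ y) = ∑ y ∈ (orbit Φ x).toFinset, f y := by
  refine Finset.sum_equiv (Equiv.ofBijective Φ hΦ) ?_ ?_
  · intro i
    simp only [Set.mem_toFinset, Equiv.ofBijective_apply]
    exact (mem_orbit_apply_iff Φ x hΦ).symm
  · intro i _
    rfl

lemma orbit_card_pos : 0 < (orbit Φ x).toFinset.card := by
  rw [Finset.card_pos]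
  exact ⟨x, Set.mem_toFinset.2 (mem_orbit_self Φ x)⟩

lemma nat_card_orbit : (Nat.card ↥(orbit Φ x) : ℝ) = ((orbit Φ x).toFinset.card : ℝ) := by
  rw [Nat.card_eq_card_toFinset]

lemma expect_orbitDist (f : β → ℝ) :
    expect (orbitDist Φ x) f
      = ((orbit Φ x).toFinset.card : ℝ)⁻¹ * ∑ y ∈ (orbit Φ x).toFinset, f y := by
  rw [expect, finsum_eq_sum_of_fintype]
  have h1 : ∀ y : β, orbitDist Φ x y * f y
      = if y ∈ (orbit Φ x).toFinset then ((orbit Φ x).toFinset.card : ℝ)⁻¹ * f y else 0 := by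
    intro y
    simp only [orbitDist, Set.mem_toFinset, nat_card_orbit]
    split <;> simp
  simp_rw [h1]
  rw [Finset.sum_ite_mem, Finset.univ_inter, Finset.mul_sum]

lemma orbitDist_isProbDist : IsProbDist (orbitDist Φ x) := by
  constructor
  · intro y
    unfold orbitDist
    split
    · positivity
    · exact le_refl 0
  · rw [finsum_eq_sum_of_fintype]
    have h1 : ∀ y : β, orbitDist Φ x y
        = if y ∈ (orbit Φ x).toFinset then ((orbit Φ x).toFinset.card : ℝ)⁻¹ else 0 := by
      intro y
      simp only [orbitDist, Set.mem_toFinset, nat_card_orbit]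
    simp_rw [h1]
    rw [Finset.sum_ite_mem, Finset.univ_inter, Finset.sum_const, nsmul_eq_mul]
    rw [mul_inv_cancel₀]
    have := orbit_card_pos Φ x
    positivity



end Aux2

section Aux3

variable {α : Type*} [Finite α] [PartialOrder α]

/-- Covers of an ideal `I` in `J(P)` are exactly `I \ {p}` for `p` maximal in `I`. -/
lemma covby_ideal_iff (I : OIdeal α) (J : OIdeal α) :
    J ⋖ I ↔ ∃ p : α, (p ∈ I.1 ∧ ∀ q, q ∈ I.1 → p ≤ q → p = q) ∧ J.1 = I.1 \ {p} := by
  constructor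
  · intro hJI
    have hlt : J < I := hJI.1
    have hss : J.1 ⊂ I.1 := by
      refine ⟨hlt.le, fun h => hlt.ne (Subtype.ext (le_antisymm hlt.le h))⟩
    obtain ⟨p0, hp0⟩ := Set.nonempty_of_ssubset hss
    -- pick p maximal in I.1 \ J.1
    have hne : (I.1 \ J.1).Nonempty := Set.nonempty_of_ssubset hss
    obtain ⟨p, hp, hpmax⟩ := Set.Finite.exists_maximalFor id (I.1 \ J.1) (Set.toFinite _) hne
    have hpmaxI : ∀ q, q ∈ I.1 → p ≤ q → p = q := by
      intro q hq hpq
      by_cases hqJ : q ∈ J.1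
      · exact absurd (J.2 hpq hqJ) hp.2
      · exact le_antisymm hpq (hpmax ⟨hq, hqJ⟩ hpq)
    have hKlower : IsLowerSet (I.1 \ {p}) := by
      rw [lower_diff_iff I.2]
      intro z hz hzI
      exact hz.ne' (hpmaxI z hzI hz.le).symm
    set K : OIdeal α := ⟨I.1 \ {p}, hKlower⟩ with hK
    have hJK : J ≤ K := by
      intro y hy
      exact ⟨hlt.le hy, fun h => hp.2 (h ▸ hy)⟩
    have hKI : K < I := by
      constructor
      · exact fun y hy => hy.1
      · intro hIK
        exact (hIK hp.1).2 rfl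
    rcases eq_or_lt_of_le hJK with h | h
    · exact ⟨p, ⟨hp.1, hpmaxI⟩, by rw [h]⟩
    · exact absurd hKI (hJI.2 h)
  · rintro ⟨p, ⟨hpI, hpmax⟩, hJ⟩
    have hJI : J < I := by
      constructor
      · intro y hy; exact (hJ ▸ hy).1
      · intro hIJ
        have := hIJ hpI
        rw [hJ] at this
        exact this.2 rfl
    refine ⟨hJI, ?_⟩
    intro K hJK hKI
    -- J < K ≤ I with K ≠ I impossible
    obtain ⟨z, hzK, hzJ⟩ := Set.exists_of_ssubset (show J.1 ⊂ K.1 from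
      ⟨hJK.le, fun h => hJK.ne (Subtype.ext (le_antisymm hJK.le h))⟩)
    have hzI : z ∈ I.1 := hKI.le hzK
    have hzp : z = p := by
      by_contra hne
      exact hzJ (hJ ▸ ⟨hzI, hne⟩)
    subst hzp
    -- then K ⊇ (I \ {z}) ∪ {z} = I
    have : I ≤ K := by
      intro y hy
      by_cases hyz : y = z
      · exact hyz ▸ hzK
      · refine hJK.le ?_
        have : y ∈ J.1 := by rw [hJ]; exact ⟨hy, hyz⟩
        exact this
    exact absurd this hKI.not_ge

lemma ddeg_eq_antichainCard (I : OIdeal α) : ddeg I = antichainCard I := by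
  rw [ddeg, antichainCard]
  congr 1
  have h1 : ∀ p : {p : α // p ∈ I.1 ∧ ∀ q, q ∈ I.1 → p ≤ q → p = q},
      IsLowerSet (I.1 \ {(p : α)}) := by
    intro p
    rw [lower_diff_iff I.2]
    intro z hz hzI
    exact hz.ne' (p.2.2 z hzI hz.le).symm
  have h2 : ∀ p : {p : α // p ∈ I.1 ∧ ∀ q, q ∈ I.1 → p ≤ q → p = q},
      (⟨I.1 \ {(p : α)}, h1 p⟩ : OIdeal α) ⋖ I := by
    intro p
    rw [covby_ideal_iff]
    exact ⟨p, p.2, rfl⟩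
  let g : {p : α // p ∈ I.1 ∧ ∀ q, q ∈ I.1 → p ≤ q → p = q} → {J : OIdeal α // J ⋖ I} :=
    fun p => ⟨⟨I.1 \ {(p : α)}, h1 p⟩, h2 p⟩
  have hg : Function.Bijective g := by
    constructor
    · rintro ⟨p, hp⟩ ⟨p', hp'⟩ he
      have he' : I.1 \ {p} = I.1 \ {p'} :=
        congrArg (fun J : {J : OIdeal α // J ⋖ I} => J.1.1) he
      ext1
      by_contra hne
      have hmem : (p : α) ∈ I.1 \ {p'} := ⟨hp.1, hne⟩
      rw [← he'] at hmem
      exact hmem.2 rfl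
    · rintro ⟨J, hJ⟩
      obtain ⟨p, hpmax, hJp⟩ := (covby_ideal_iff I J).1 hJ
      refine ⟨⟨p, hpmax⟩, ?_⟩
      apply Subtype.ext
      apply Subtype.ext
      exact hJp.symm
  exact (Nat.card_congr (Equiv.ofBijective g hg)).symm


def minCompl (I : OIdeal α) (y : α) : Prop :=
  y ∉ I.1 ∧ ∀ z, z ∉ I.1 → z ≤ y → z = y

def maxIn (I : OIdeal α) (p : α) : Prop :=
  p ∈ I.1 ∧ ∀ q, q ∈ I.1 → p ≤ q → p = q

lemma tplus_iff_minCompl (p : α) (I : OIdeal α) : Tplus p I = 1 ↔ minCompl I p := by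
  rw [Tplus_eq_one_iff]
  constructor
  · rintro ⟨h1, h2⟩
    refine ⟨h1, fun z hz hzp => ?_⟩
    rcases eq_or_lt_of_le hzp with h | h
    · exact h
    · exact absurd (h2 z h) hz
  · rintro ⟨h1, h2⟩
    refine ⟨h1, fun z hz => ?_⟩
    by_contra hzI
    exact hz.ne (h2 z hzI hz.le)

lemma tminus_iff_maxIn (p : α) (I : OIdeal α) : Tminus p I = 1 ↔ maxIn I p := by
  rw [Tminus_eq_one_iff]
  constructor
  · rintro ⟨h1, h2⟩
    refine ⟨h1, fun q hq hpq => ?_⟩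
    rcases eq_or_lt_of_le hpq with h | h
    · exact h
    · exact absurd hq (h2 q h)
  · rintro ⟨h1, h2⟩
    refine ⟨h1, fun z hz hzI => ?_⟩
    exact hz.ne (h2 z hzI hz.le)

lemma minCompl_iff_maxIn_rowmotion (p : α) (I : OIdeal α) :
    minCompl I p ↔ maxIn (rowmotion I) p := by
  constructor
  · rintro hp
    refine ⟨⟨p, hp, le_refl p⟩, ?_⟩
    rintro q ⟨y, hy, hqy⟩ hpq
    have : p = y := hy.2 p hp.1 (hpq.trans hqy)
    subst this
    exact le_antisymm hpq hqy
  · rintro ⟨⟨y, hy, hpy⟩, hmax⟩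
    have : p = y := hmax y ⟨y, hy, le_refl y⟩ hpy
    subst this
    exact hy

lemma tplus_eq_tminus_rowmotion (p : α) (I : OIdeal α) :
    Tplus p I = Tminus p (rowmotion I) := by
  have h1 := (tplus_iff_minCompl p I).trans
    ((minCompl_iff_maxIn_rowmotion p I).trans (tminus_iff_maxIn p (rowmotion I)).symm)
  have h2 : Tplus p I = 0 ∨ Tplus p I = 1 := by unfold Tplus; split <;> simp
  have h3 : Tminus p (rowmotion I) = 0 ∨ Tminus p (rowmotion I) = 1 := by
    unfold Tminus; split <;> simp
  rcases h2 with h2 | h2 <;> rcases h3 with h3 | h3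
  · rw [h2, h3]
  · have := h1.2 h3; rw [h2] at this; norm_num at this
  · have := h1.1 h2; rw [h3] at this; norm_num at this
  · rw [h2, h3]

lemma not_mem_iff_exists_minCompl (I : OIdeal α) (x : α) :
    x ∉ I.1 ↔ ∃ y, minCompl I y ∧ y ≤ x := by
  constructor
  · intro hx
    have hne : ({w | w ∉ I.1 ∧ w ≤ x} : Set α).Nonempty := ⟨x, hx, le_refl x⟩
    obtain ⟨y, hy, hymin⟩ :=
      Set.Finite.exists_minimalFor id _ (Set.toFinite {w | w ∉ I.1 ∧ w ≤ x}) hne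
    refine ⟨y, ⟨hy.1, fun z hz hzy => ?_⟩, hy.2⟩
    exact le_antisymm hzy (hymin ⟨hz, hzy.trans hy.2⟩ hzy)
  · rintro ⟨y, hy, hyx⟩ hxI
    exact hy.1 (I.2 hyx hxI)

lemma rowmotion_injective : Function.Injective (rowmotion (α := α)) := by
  intro I I' he
  have key : ∀ J : OIdeal α, ∀ x, x ∈ J.1 ↔ ¬∃ y, maxIn (rowmotion J) y ∧ y ≤ x := by
    intro J x
    rw [← not_iff_not, not_not, not_mem_iff_exists_minCompl]
    constructor
    · rintro ⟨y, hy, hyx⟩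
      exact ⟨y, (minCompl_iff_maxIn_rowmotion y J).1 hy, hyx⟩
    · rintro ⟨y, hy, hyx⟩
      exact ⟨y, (minCompl_iff_maxIn_rowmotion y J).2 hy, hyx⟩
  apply Subtype.ext
  ext x
  rw [key I x, key I' x, he]


lemma rowmotion_bijective : Function.Bijective (rowmotion (α := α)) :=
  Finite.injective_iff_bijective.1 rowmotion_injective

/-- A bijective map intertwining the toggleability statistics over its orbits is
toggle-symmetric. -/
lemma toggleSymmetric_orbitDist_rowmotion (I₀ : OIdeal α) :
    ToggleSymmetric (orbitDist (rowmotion (α := α)) I₀) := by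
  intro p
  haveI : Fintype (OIdeal α) := Fintype.ofFinite _
  rw [expect_orbitDist, expect_orbitDist]
  congr 1
  calc ∑ y ∈ (orbit rowmotion I₀).toFinset, Tplus p y
      = ∑ y ∈ (orbit rowmotion I₀).toFinset, Tminus p (rowmotion y) := by
        refine Finset.sum_congr rfl fun y _ => tplus_eq_tminus_rowmotion p y
    _ = ∑ y ∈ (orbit rowmotion I₀).toFinset, Tminus p y :=
        orbit_sum rowmotion I₀ rowmotion_bijective (Tminus p)

lemma toggleSymmetric_orbitDist_applyToggles (p : α) (L₁ L₂ : List α)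
    (hp1 : p ∉ L₁) (hp2 : p ∉ L₂)
    (hdown : (∀ q ∈ L₁, ¬ q ⋖ p) ∨ (∀ q ∈ L₂, ¬ q ⋖ p))
    (hup : (∀ q ∈ L₁, ¬ p ⋖ q) ∨ (∀ q ∈ L₂, ¬ p ⋖ q))
    (I₀ : OIdeal α) :
    expect (orbitDist (applyToggles (L₁ ++ p :: L₂)) I₀) (Tplus p) =
      expect (orbitDist (applyToggles (L₁ ++ p :: L₂)) I₀) (Tminus p) := by
  haveI : Fintype (OIdeal α) := Fintype.ofFinite _
  set Φ : OIdeal α → OIdeal α := applyToggles (L₁ ++ p :: L₂) with hΦdef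
  have hΦbij : Function.Bijective Φ := applyToggles_bijective _
  set O : Finset (OIdeal α) := (orbit Φ I₀).toFinset with hO
  set B : OIdeal α → OIdeal α := applyToggles L₁ with hB
  -- step 1 : the sums of Tplus/Tminus at the intermediate states agree
  have step1 : ∑ I ∈ O, Tplus p (B I) = ∑ I ∈ O, Tminus p (B I) := by
    have key : ∀ I : OIdeal α, Tplus p (B I) - Tminus p (B I) =
        (if p ∈ (Φ I).1 then (1:ℝ) else 0) - (if p ∈ I.1 then (1:ℝ) else 0) := by
      intro I
      rw [hB, Tplus_char p L₁ L₂ hp1 hp2 I, Tminus_char p L₁ L₂ hp1 hp2 I]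
      by_cases hA : p ∈ I.1 <;> by_cases hC : p ∈ (Φ I).1 <;>
        simp [hA, hC, ← hΦdef]
    have hsum : ∑ I ∈ O, (Tplus p (B I) - Tminus p (B I)) = 0 := by
      calc ∑ I ∈ O, (Tplus p (B I) - Tminus p (B I))
          = ∑ I ∈ O, ((if p ∈ (Φ I).1 then (1:ℝ) else 0) - (if p ∈ I.1 then (1:ℝ) else 0)) :=
            Finset.sum_congr rfl fun I _ => key I
        _ = (∑ I ∈ O, (if p ∈ (Φ I).1 then (1:ℝ) else 0))
              - ∑ I ∈ O, (if p ∈ I.1 then (1:ℝ) else 0) := Finset.sum_sub_distrib ..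
        _ = 0 := by
            rw [orbit_sum Φ I₀ hΦbij (fun I => if p ∈ I.1 then (1:ℝ) else 0), sub_self]
    have := Finset.sum_sub_distrib (s := O)
      (f := fun I => Tplus p (B I)) (g := fun I => Tminus p (B I))
    rw [this] at hsum
    linarith
  -- auxiliary identities at the post-toggle states
  have hpost : ∀ I : OIdeal α, Φ I = applyToggles L₂ (toggle p (B I)) := by
    intro I
    rw [hΦdef, hB, applyToggles_append, applyToggles_cons]
  have step2 : ∑ I ∈ O, Tplus p I = ∑ I ∈ O, Tplus p (B I) := by
    rcases hdown with hd | hd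
    · refine Finset.sum_congr rfl fun I _ => ?_
      rw [hB, Tplus_applyToggles (fun x hx => ⟨fun hh => hp1 (by rw [← hh]; exact hx), hd x hx⟩) I]
    · have key : ∀ I : OIdeal α, Tplus p (Φ I) = Tminus p (B I) := by
        intro I
        rw [hpost I, Tplus_applyToggles (fun x hx => ⟨fun hh => hp2 (by rw [← hh]; exact hx), hd x hx⟩),
          Tplus_toggle]
      calc ∑ I ∈ O, Tplus p I = ∑ I ∈ O, Tplus p (Φ I) :=
            (orbit_sum Φ I₀ hΦbij (Tplus p)).symm
        _ = ∑ I ∈ O, Tminus p (B I) := Finset.sum_congr rfl fun I _ => key I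
        _ = ∑ I ∈ O, Tplus p (B I) := step1.symm
  have step3 : ∑ I ∈ O, Tminus p I = ∑ I ∈ O, Tminus p (B I) := by
    rcases hup with hu | hu
    · refine Finset.sum_congr rfl fun I _ => ?_
      rw [hB, Tminus_applyToggles (fun x hx => ⟨fun hh => hp1 (by rw [← hh]; exact hx), hu x hx⟩) I]
    · have key : ∀ I : OIdeal α, Tminus p (Φ I) = Tplus p (B I) := by
        intro I
        rw [hpost I, Tminus_applyToggles (fun x hx => ⟨fun hh => hp2 (by rw [← hh]; exact hx), hu x hx⟩),
          Tminus_toggle]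
      calc ∑ I ∈ O, Tminus p I = ∑ I ∈ O, Tminus p (Φ I) :=
            (orbit_sum Φ I₀ hΦbij (Tminus p)).symm
        _ = ∑ I ∈ O, Tplus p (B I) := Finset.sum_congr rfl fun I _ => key I
        _ = ∑ I ∈ O, Tminus p (B I) := step1
  rw [expect_orbitDist, expect_orbitDist]
  congr 1
  rw [← hO, step2, step3]
  exact step1

/-- Master lemma: a bijection with toggle-symmetric orbit distributions is `c`-mesic for
the antichain cardinality statistic, provided `J(P)` is tCDE. -/
lemma mesic_of_toggleSymmetric (c : ℝ) (htcde : IsTCDE α)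
    (hc : expect (uni (OIdeal α)) ddeg = c)
    (Φ : OIdeal α → OIdeal α) (hΦ : Function.Bijective Φ) (I₀ : OIdeal α)
    (hTS : ToggleSymmetric (orbitDist Φ I₀)) :
    expect (orbitDist Φ I₀) antichainCard = c := by
  haveI : Fintype (OIdeal α) := Fintype.ofFinite _
  have h1 : expect (orbitDist Φ I₀) antichainCard = expect (orbitDist Φ I₀) ddeg := by
    rw [expect, expect]
    exact finsum_congr fun I => by rw [ddeg_eq_antichainCard]
  rw [h1, htcde _ (orbitDist_isProbDist Φ I₀) hTS, hc]

end Aux3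

/-- Corollary `cor:homomesy`.  Let `P` be a finite poset such that `J(P)`
is tCDE with edge density `c`.  Then the antichain cardinality statistic `I ↦ #max(I)` is
`c`-mesic with respect to the action of rowmotion `Φ_row` on `J(P)`: the average of `#max(I)`
over every `Φ_row`-orbit equals `c`.  If moreover `P` is ranked with rank function `rk` taking
values in `{0, …, r}`, then for every permutation `σ` of `{0, …, r}` the antichain cardinality
statistic is also `c`-mesic with respect to the rank-permuted rowmotion `Φ_{row(σ)}`
(realized as the composition of toggles along any list `L` enumerating `P` with
`σ⁻¹(rk(·))` weakly decreasing). -/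
theorem statement19 (α : Type*) [Finite α] [PartialOrder α] (c : ℝ)
    (htcde : IsTCDE α)
    (hc : expect (uni (OIdeal α)) ddeg = c) :
    (∀ I₀ : OIdeal α, expect (orbitDist rowmotion I₀) antichainCard = c) ∧
    (∀ (rk : α → ℕ) (r : ℕ), (∃ p, rk p = 0) → (∀ p q : α, p ⋖ q → rk q = rk p + 1) →
      ∀ (hler : ∀ p, rk p ≤ r) (σ : Equiv.Perm (Fin (r + 1))) (L : List α),
        L.Nodup → (∀ p : α, p ∈ L) →
        (∀ s t : Fin L.length, s ≤ t →
          ((σ.symm ⟨rk (L.get t), Nat.lt_succ_of_le (hler _)⟩ : Fin (r + 1)) : ℕ) ≤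
            ((σ.symm ⟨rk (L.get s), Nat.lt_succ_of_le (hler _)⟩ : Fin (r + 1)) : ℕ)) →
        ∀ I₀ : OIdeal α, expect (orbitDist (applyToggles L) I₀) antichainCard = c) := by
  constructor
  · intro I₀
    exact mesic_of_toggleSymmetric c htcde hc rowmotion rowmotion_bijective I₀
      (toggleSymmetric_orbitDist_rowmotion I₀)
  · intro rk r hrk0 hcov hler σ L hnodup hLmem hmono I₀
    refine mesic_of_toggleSymmetric c htcde hc _ (applyToggles_bijective L) I₀ ?_
    intro p
    obtain ⟨L₁, L₂, hsplit⟩ := List.append_of_mem (hLmem p)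
    subst hsplit
    obtain ⟨hnd1, hnd2, hdisj⟩ := List.nodup_append.1 hnodup
    have hp1 : p ∉ L₁ := fun h => hdisj p h p (List.mem_cons_self (a := p) (l := L₂)) rfl
    have hp2 : p ∉ L₂ := (List.nodup_cons.1 hnd2).1
    have keyval : ∀ q₁ ∈ L₁, ∀ q₂ ∈ L₂, rk q₁ = rk q₂ → rk q₁ = rk p := by
      intro q₁ hq₁ q₂ hq₂ hrkeq
      obtain ⟨n₁, hg₁⟩ := List.mem_iff_get.1 hq₁
      obtain ⟨n₂, hg₂⟩ := List.mem_iff_get.1 hq₂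
      have hlen : (L₁ ++ p :: L₂).length = L₁.length + (L₂.length + 1) := by
        simp [List.length_append]
      have hs : (n₁ : ℕ) < (L₁ ++ p :: L₂).length := by
        rw [hlen]; have := n₁.2; omega
      have hm : L₁.length < (L₁ ++ p :: L₂).length := by rw [hlen]; omega
      have ht : L₁.length + ((n₂ : ℕ) + 1) < (L₁ ++ p :: L₂).length := by
        rw [hlen]; have := n₂.2; omega
      have hgs : (L₁ ++ p :: L₂).get ⟨(n₁ : ℕ), hs⟩ = q₁ := by
        rw [List.get_eq_getElem]
        rw [List.getElem_append_left n₁.2]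
        rw [← hg₁, List.get_eq_getElem]
      have hgm : (L₁ ++ p :: L₂).get ⟨L₁.length, hm⟩ = p := by
        rw [List.get_eq_getElem, List.getElem_append_right (le_refl _)]
        simp
      have hgt : (L₁ ++ p :: L₂).get ⟨L₁.length + ((n₂ : ℕ) + 1), ht⟩ = q₂ := by
        rw [List.get_eq_getElem]
        simp only [Fin.val_mk]
        rw [List.getElem_append_right (by omega)]
        simp [← hg₂]
      have h1 := hmono ⟨(n₁ : ℕ), hs⟩ ⟨L₁.length, hm⟩
        (Fin.mk_le_mk.mpr (le_of_lt n₁.2))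
      have h2 := hmono ⟨L₁.length, hm⟩ ⟨L₁.length + ((n₂ : ℕ) + 1), ht⟩
        (Fin.mk_le_mk.mpr (by omega))
      rw [hgs, hgm] at h1
      rw [hgm, hgt] at h2
      have heq : (⟨rk q₁, Nat.lt_succ_of_le (hler q₁)⟩ : Fin (r + 1)) =
          ⟨rk q₂, Nat.lt_succ_of_le (hler q₂)⟩ := Fin.val_injective hrkeq
      rw [← heq] at h2
      have hval : ((σ.symm ⟨rk q₁, Nat.lt_succ_of_le (hler q₁)⟩ : Fin (r + 1)) : ℕ) =
          ((σ.symm ⟨rk p, Nat.lt_succ_of_le (hler p)⟩ : Fin (r + 1)) : ℕ) :=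
        le_antisymm h2 h1
      have hfin : (⟨rk q₁, Nat.lt_succ_of_le (hler q₁)⟩ : Fin (r + 1)) =
          ⟨rk p, Nat.lt_succ_of_le (hler p)⟩ :=
        σ.symm.injective (Fin.val_injective hval)
      exact congrArg Fin.val hfin
    have hdown : (∀ q ∈ L₁, ¬ q ⋖ p) ∨ (∀ q ∈ L₂, ¬ q ⋖ p) := by
      by_contra hcontra
      push_neg at hcontra
      obtain ⟨⟨q₁, hq₁, hc₁⟩, ⟨q₂, hq₂, hc₂⟩⟩ := hcontra
      have e₁ := hcov q₁ p hc₁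
      have e₂ := hcov q₂ p hc₂
      have := keyval q₁ hq₁ q₂ hq₂ (by omega)
      omega
    have hup : (∀ q ∈ L₁, ¬ p ⋖ q) ∨ (∀ q ∈ L₂, ¬ p ⋖ q) := by
      by_contra hcontra
      push_neg at hcontra
      obtain ⟨⟨q₁, hq₁, hc₁⟩, ⟨q₂, hq₂, hc₂⟩⟩ := hcontra
      have e₁ := hcov p q₁ hc₁
      have e₂ := hcov p q₂ hc₂
      have := keyval q₁ hq₁ q₂ hq₂ (by omega)
      omega
    exact toggleSymmetric_orbitDist_applyToggles p L₁ L₂ hp1 hp2 hdown hup I₀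

end CDEPaper
end
end
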